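/- arXiv:1402.3044 — 9 statements merged into one kernel-verified Lean document; each statement's English description precedes it below -/
import Mathlib

section
/- Let α = (α_1, …, α_K) be a nonincreasing OWA vector of nonnegative reals. Then the set function u^α : 2^A → ℝ is nondecreasing (W ⊆ W' implies u^α(W) ≤ u^α(W')) and submodular (for all W ⊆ W' ⊆ A and all a ∈ A ∖ W', u^α(W ∪ {a}) − u^α(W) ≥ u^α(W' ∪ {a}) − u^α(W')). -/
open Finset

/-- The OWA-aggregated total utility of a set `W` of items: for each agent `i` in `N`,
the intrinsic utilities of the items of `W` are sorted in nonincreasing order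
`x_0 ≥ x_1 ≥ …` and the agent contributes `∑_{j < K} α j * x_j`
(positions beyond `|W|` contribute `0`).  The OWA vector is `0`-indexed:
`α j` is entry `α_{j+1}` of the paper. -/
noncomputable def owaUtil {I A : Type*} [DecidableEq A]
    (N : Finset I) (u : I → A → ℝ) (K : ℕ) (α : ℕ → ℝ) (W : Finset A) : ℝ :=
  ∑ i ∈ N, ∑ j ∈ Finset.range K,
    α j * (((W.1.map (u i)).sort (· ≤ ·)).reverse.getD j 0)

namespace OwaAux

/-- The descending sorted list of a multiset of reals. -/
noncomputable def dl (M : Multiset ℝ) : List ℝ := (M.sort (· ≤ ·)).reverse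

/-- The `j`-th largest element (default `0`). -/
noncomputable def dv (M : Multiset ℝ) (j : ℕ) : ℝ := (dl M).getD j 0

/-- The sum of the `k` largest elements. -/
noncomputable def ts (M : Multiset ℝ) (k : ℕ) : ℝ := ∑ j ∈ Finset.range k, dv M j

lemma dl_pairwise (M : Multiset ℝ) : (dl M).Pairwise (· ≥ ·) :=
  List.pairwise_reverse.mpr (M.pairwise_sort (· ≤ ·))

lemma mem_dl {M : Multiset ℝ} {x : ℝ} : x ∈ dl M ↔ x ∈ M := by
  simp [dl, Multiset.mem_sort]

lemma getD_le_of_forall {c : ℝ} {B : List ℝ} (hB : ∀ x ∈ B, x ≤ c) (hc : 0 ≤ c) (n : ℕ) :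
    B.getD n 0 ≤ c := by
  rcases lt_or_ge n B.length with h | h
  · rw [List.getD_eq_getElem _ _ h]; exact hB _ (List.getElem_mem h)
  · rw [List.getD_eq_default _ _ h]; exact hc

lemma getD_nonneg {l : List ℝ} (h : ∀ x ∈ l, 0 ≤ x) (n : ℕ) : 0 ≤ l.getD n 0 := by
  rcases lt_or_ge n l.length with h' | h'
  · rw [List.getD_eq_getElem _ _ h']; exact h _ (List.getElem_mem h')
  · rw [List.getD_eq_default _ _ h']

lemma getD_anti {l : List ℝ} (hp : l.Pairwise (· ≥ ·)) (h0 : ∀ x ∈ l, 0 ≤ x)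
    {j k : ℕ} (hjk : j ≤ k) : l.getD k 0 ≤ l.getD j 0 := by
  rcases lt_or_ge k l.length with hk | hk
  · have hj : j < l.length := lt_of_le_of_lt hjk hk
    rw [List.getD_eq_getElem _ _ hk, List.getD_eq_getElem _ _ hj]
    rcases eq_or_lt_of_le hjk with rfl | h
    · exact le_refl _
    · exact List.pairwise_iff_getElem.mp hp j k hj hk h
  · rw [List.getD_eq_default _ _ hk]; exact getD_nonneg h0 j

lemma insert_struct (c : ℝ) (M : Multiset ℝ) :
    ∃ A B : List ℝ, dl M = A ++ B ∧ dl (c ::ₘ M) = A ++ c :: B ∧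
      (∀ x ∈ A, c ≤ x) ∧ (∀ x ∈ B, x ≤ c) := by
  have hsorted : (c ::ₘ M).sort (· ≤ ·) =
      (M.sort (· ≤ ·)).orderedInsert (· ≤ ·) c := by
    have p1 : List.Perm ((c ::ₘ M).sort (· ≤ ·)) (c :: M.sort (· ≤ ·)) := by
      rw [← Multiset.coe_eq_coe]
      rw [Multiset.sort_eq, ← Multiset.cons_coe, Multiset.sort_eq]
    exact List.Perm.eq_of_pairwise'
      (Multiset.pairwise_sort _ _) ((Multiset.pairwise_sort M _).orderedInsert c _)
      (p1.trans (List.perm_orderedInsert _ c _).symm)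
  obtain ⟨t, d, h2, h1⟩ : ∃ t d : List ℝ, (c ::ₘ M).sort (· ≤ ·) = t ++ c :: d ∧
      M.sort (· ≤ ·) = t ++ d := by
    refine ⟨_, _, by rw [hsorted, List.orderedInsert_eq_take_drop], ?_⟩
    exact List.takeWhile_append_dropWhile.symm
  have e1 : dl M = d.reverse ++ t.reverse := by rw [dl, h1, List.reverse_append]
  have e2 : dl (c ::ₘ M) = d.reverse ++ c :: t.reverse := by
    rw [dl, h2]; simp
  have hp := dl_pairwise (c ::ₘ M)
  rw [e2] at hp
  rcases List.pairwise_append.mp hp with ⟨_, hcB, hAB⟩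
  exact ⟨_, _, e1, e2, fun x hx => hAB x hx c List.mem_cons_self,
    fun x hx => (List.pairwise_cons.mp hcB).1 x hx⟩

lemma sum_getD (l : List ℝ) (k : ℕ) :
    ∑ j ∈ Finset.range k, l.getD j 0 = (l.take k).sum := by
  induction k generalizing l with
  | zero => simp
  | succ k ih =>
    rw [Finset.sum_range_succ']
    cases l with
    | nil => simp
    | cons a t =>
      simp only [List.getD_cons_succ, List.getD_cons_zero, List.take_succ_cons, List.sum_cons]
      rw [ih t]; ring

lemma ts_succ (M : Multiset ℝ) (k : ℕ) : ts M (k+1) = ts M k + dv M k :=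
  Finset.sum_range_succ _ _

lemma ts_insert (c : ℝ) (M : Multiset ℝ) (hc : 0 ≤ c) (k : ℕ) :
    ts (c ::ₘ M) (k + 1) = ts M k + max c (dv M k) := by
  obtain ⟨A, B, e1, e2, hA, hB⟩ := insert_struct c M
  have hts : ts (c ::ₘ M) (k+1) = ((A ++ c :: B).take (k+1)).sum := by
    unfold ts dv; rw [e2, sum_getD]
  have hts' : ts M k = ((A ++ B).take k).sum := by
    unfold ts dv; rw [e1, sum_getD]
  rcases lt_or_ge k A.length with hk | hk
  · have hdv : dv M k = A[k] := by
      rw [dv, e1, List.getD_append _ _ _ _ hk, List.getD_eq_getElem _ _ hk]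
    have hmax : max c (dv M k) = dv M k := max_eq_right (hdv ▸ hA _ (List.getElem_mem hk))
    rw [hts, hts', hmax, List.take_append, List.take_append,
      show k + 1 - A.length = 0 by omega, show k - A.length = 0 by omega]
    simp only [List.take_zero, List.append_nil]
    rw [List.sum_take_succ _ _ hk, hdv]
  · have hdvB : dv M k = B.getD (k - A.length) 0 := by
      rw [dv, e1, List.getD_append_right _ _ _ _ hk]
    have hmax : max c (dv M k) = c := max_eq_left (hdvB ▸ getD_le_of_forall hB hc _)
    rw [hts, hts', hmax, List.take_append, List.take_append,
      List.take_of_length_le (show A.length ≤ k + 1 by omega),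
      List.take_of_length_le hk,
      show k + 1 - A.length = (k - A.length) + 1 by omega,
      List.take_succ_cons, List.sum_append, List.sum_append, List.sum_cons]
    ring

lemma dv_le_insert (c : ℝ) (M : Multiset ℝ) (hc : 0 ≤ c) (hM : ∀ x ∈ M, 0 ≤ x) (j : ℕ) :
    dv M j ≤ dv (c ::ₘ M) j := by
  obtain ⟨A, B, e1, e2, hA, hB⟩ := insert_struct c M
  have hBp : B.Pairwise (· ≥ ·) := by
    have h := dl_pairwise M; rw [e1] at h; exact (List.pairwise_append.mp h).2.1
  have hB0 : ∀ x ∈ B, 0 ≤ x := fun x hx =>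
    hM x (mem_dl.mp (by rw [e1]; exact List.mem_append_right _ hx))
  rw [dv, dv, e1, e2]
  rcases lt_or_ge j A.length with hj | hj
  · rw [List.getD_append _ _ _ _ hj, List.getD_append _ _ _ _ hj]
  · rw [List.getD_append_right _ _ _ _ hj, List.getD_append_right _ _ _ _ hj]
    rcases eq_or_lt_of_le hj with heq | hlt
    · rw [show j - A.length = 0 by omega]
      simp only [List.getD_cons_zero]
      exact getD_le_of_forall hB hc 0
    · obtain ⟨m, hm⟩ : ∃ m, j - A.length = m + 1 := ⟨j - A.length - 1, by omega⟩
      rw [hm, List.getD_cons_succ]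
      exact getD_anti hBp hB0 (Nat.le_succ m)

lemma dv_add (M t : Multiset ℝ) (j : ℕ) :
    (∀ x ∈ M + t, 0 ≤ x) → dv M j ≤ dv (M + t) j := by
  induction t using Multiset.induction with
  | empty => intro _; simp
  | cons a s ih =>
    intro h
    have h1 : ∀ x ∈ M + s, 0 ≤ x := fun x hx =>
      h x (by rw [Multiset.add_cons]; exact Multiset.mem_cons_of_mem hx)
    have h2 : 0 ≤ a := h a (by rw [Multiset.add_cons]; exact Multiset.mem_cons_self _ _)
    calc dv M j ≤ dv (M + s) j := ih h1
      _ ≤ dv (a ::ₘ (M + s)) j := dv_le_insert a (M + s) h2 h1 j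
      _ = dv (M + a ::ₘ s) j := by rw [Multiset.add_cons]

lemma dv_mono {M M' : Multiset ℝ} (h : M ≤ M') (h0 : ∀ x ∈ M', 0 ≤ x) (j : ℕ) :
    dv M j ≤ dv M' j := by
  obtain ⟨t, rfl⟩ := Multiset.le_iff_exists_add.mp h
  exact dv_add M t j h0

lemma abel_sum (β x : ℕ → ℝ) (K : ℕ) :
    ∑ j ∈ Finset.range K, β j * x j =
      ∑ k ∈ Finset.range K, (β k - β (k+1)) * (∑ j ∈ Finset.range (k+1), x j)
        + β K * ∑ j ∈ Finset.range K, x j := by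
  induction K with
  | zero => simp
  | succ K ih =>
    rw [Finset.sum_range_succ (f := fun j => β j * x j),
      Finset.sum_range_succ (f := fun k => (β k - β (k+1)) * ∑ j ∈ Finset.range (k+1), x j),
      Finset.sum_range_succ (f := x), ih]
    ring

/-- The difference coefficients of the (truncated) OWA vector. -/
noncomputable def gam (K : ℕ) (α : ℕ → ℝ) (k : ℕ) : ℝ :=
  (if k < K then α k else 0) - (if k + 1 < K then α (k+1) else 0)

lemma gam_nonneg {K : ℕ} {α : ℕ → ℝ} (hα_nonneg : ∀ j, j < K → 0 ≤ α j)
    (hα_mono : ∀ j k, j ≤ k → k < K → α k ≤ α j) {k : ℕ} (hk : k < K) :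
    0 ≤ gam K α k := by
  unfold gam
  rw [if_pos hk]
  split_ifs with h
  · have := hα_mono k (k+1) (Nat.le_succ k) h; linarith
  · have := hα_nonneg k hk; linarith

/-- Per-agent OWA value. -/
noncomputable def F (K : ℕ) (α : ℕ → ℝ) (M : Multiset ℝ) : ℝ :=
  ∑ j ∈ Finset.range K, α j * dv M j

lemma F_eq (K : ℕ) (α : ℕ → ℝ) (M : Multiset ℝ) :
    F K α M = ∑ k ∈ Finset.range K, gam K α k * ts M (k+1) := by
  have h1 : F K α M = ∑ j ∈ Finset.range K, (if j < K then α j else 0) * dv M j :=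
    Finset.sum_congr rfl (fun j hj => by rw [if_pos (Finset.mem_range.mp hj)])
  rw [h1, abel_sum (fun j => if j < K then α j else 0) (dv M) K]
  rw [if_neg (lt_irrefl K), zero_mul, add_zero]
  rfl

lemma F_marg (K : ℕ) (α : ℕ → ℝ) (c : ℝ) (M : Multiset ℝ) (hc : 0 ≤ c) :
    F K α (c ::ₘ M) - F K α M =
      ∑ k ∈ Finset.range K, gam K α k * (max c (dv M k) - dv M k) := by
  rw [F_eq, F_eq, ← Finset.sum_sub_distrib]
  refine Finset.sum_congr rfl (fun k _ => ?_)
  rw [ts_insert c M hc k, ts_succ]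
  ring

lemma F_mono {K : ℕ} {α : ℕ → ℝ} (hα_nonneg : ∀ j, j < K → 0 ≤ α j)
    (hα_mono : ∀ j k, j ≤ k → k < K → α k ≤ α j)
    {M M' : Multiset ℝ} (h : M ≤ M') (h0 : ∀ x ∈ M', 0 ≤ x) :
    F K α M ≤ F K α M' := by
  rw [F_eq, F_eq]
  refine Finset.sum_le_sum (fun k hk => ?_)
  refine mul_le_mul_of_nonneg_left ?_ (gam_nonneg hα_nonneg hα_mono (Finset.mem_range.mp hk))
  exact Finset.sum_le_sum (fun j _ => dv_mono h h0 j)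

lemma F_submod {K : ℕ} {α : ℕ → ℝ} (hα_nonneg : ∀ j, j < K → 0 ≤ α j)
    (hα_mono : ∀ j k, j ≤ k → k < K → α k ≤ α j)
    {c : ℝ} (hc : 0 ≤ c) {M M' : Multiset ℝ} (h : M ≤ M') (h0 : ∀ x ∈ M', 0 ≤ x) :
    F K α (c ::ₘ M') - F K α M' ≤ F K α (c ::ₘ M) - F K α M := by
  rw [F_marg K α c M' hc, F_marg K α c M hc]
  refine Finset.sum_le_sum (fun k hk => ?_)
  refine mul_le_mul_of_nonneg_left ?_ (gam_nonneg hα_nonneg hα_mono (Finset.mem_range.mp hk))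
  have hd : dv M k ≤ dv M' k := dv_mono h h0 k
  rcases le_total c (dv M' k) with h1 | h1
  · rw [max_eq_right h1, sub_self]
    rw [sub_nonneg]
    exact le_max_right _ _
  · rw [max_eq_left h1, max_eq_left (le_trans hd h1)]
    linarith

end OwaAux

/-- For a nonincreasing, nonnegative OWA vector `α = (α_1, …, α_K)`, the set function
`u^α` is nondecreasing and submodular. -/
theorem stmt_0 {I A : Type*} [DecidableEq A]
    (N : Finset I) (u : I → A → ℝ) (hu : ∀ i a, 0 ≤ u i a)
    (K : ℕ) (α : ℕ → ℝ)
    (hα_nonneg : ∀ j, j < K → 0 ≤ α j)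
    (hα_mono : ∀ j k, j ≤ k → k < K → α k ≤ α j) :
    (∀ W W' : Finset A, W ⊆ W' → owaUtil N u K α W ≤ owaUtil N u K α W') ∧
    (∀ W W' : Finset A, W ⊆ W' → ∀ a, a ∉ W' →
      owaUtil N u K α (insert a W') - owaUtil N u K α W' ≤
        owaUtil N u K α (insert a W) - owaUtil N u K α W) := by
  have howa : ∀ W : Finset A, owaUtil N u K α W = ∑ i ∈ N, OwaAux.F K α (W.1.map (u i)) := by
    intro W; rfl
  have hnn : ∀ (i : I) (W : Finset A), ∀ x ∈ W.1.map (u i), 0 ≤ x := by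
    intro i W x hx
    obtain ⟨a, _, rfl⟩ := Multiset.mem_map.mp hx
    exact hu i a
  constructor
  · intro W W' hWW
    rw [howa, howa]
    refine Finset.sum_le_sum (fun i _ => ?_)
    exact OwaAux.F_mono hα_nonneg hα_mono
      (Multiset.map_le_map (Finset.val_le_iff.mpr hWW)) (hnn i W')
  · intro W W' hWW a ha'
    have haW : a ∉ W := fun h => ha' (hWW h)
    have hins : ∀ (i : I) (V : Finset A), a ∉ V →
        ((insert a V).1.map (u i)) = u i a ::ₘ V.1.map (u i) := by
      intro i V hV
      rw [Finset.insert_val_of_notMem hV, Multiset.map_cons]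
    rw [howa, howa, howa, howa, ← Finset.sum_sub_distrib, ← Finset.sum_sub_distrib]
    refine Finset.sum_le_sum (fun i _ => ?_)
    rw [hins i W' ha', hins i W haW]
    exact OwaAux.F_submod hα_nonneg hα_mono (hu i a)
      (Multiset.map_le_map (Finset.val_le_iff.mpr hWW)) (hnn i W')
end

section
/- Let α = (α_1, …, α_K) be a nonincreasing OWA vector of nonnegative reals with α_1 > 0, and assume K ≤ |A|. Let W be any size-K subset of A maximizing u^{K-best} over all size-K subsets of A (equivalently, maximizing W ↦ Σ_{w∈W} Σ_{i∈N} u_{i,w}). Then u^α(W) ≥ ((Σ_{j=1}^K α_j)/(K·α_1)) · max_{S ⊆ A, |S| = K} u^α(S). -/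
open Finset

private lemma sum_getD_eq (L : List ℝ) :
    ∑ j ∈ Finset.range L.length, L.getD j 0 = L.sum := by
  induction L with
  | nil => simp
  | cons a l ih =>
      rw [List.length_cons, Finset.sum_range_succ']
      simp only [List.getD_cons_succ, List.getD_cons_zero, List.sum_cons, ih]
      ring

/-- For a nonincreasing nonnegative OWA `α` with `α_1 > 0`, any size-`K` set `W`
maximizing the `K`-best utility (i.e., the total intrinsic utility
`∑_{w ∈ W} ∑_{i ∈ N} u_{i,w}`) is a `(∑_{j=1}^K α_j)/(K·α_1)`-approximate solution
for `α`-OWA-Winner. -/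
theorem stmt_3 {I A : Type*} [DecidableEq A] [Fintype A]
    (N : Finset I) (u : I → A → ℝ) (hu : ∀ i a, 0 ≤ u i a)
    (K : ℕ) (hK : 1 ≤ K) (hKm : K ≤ Fintype.card A)
    (α : ℕ → ℝ)
    (hα_nonneg : ∀ j, j < K → 0 ≤ α j)
    (hα_mono : ∀ j k, j ≤ k → k < K → α k ≤ α j)
    (hα1 : 0 < α 0)
    (W : Finset A) (hWcard : W.card = K)
    (hWopt : ∀ S : Finset A, S.card = K →
      ∑ w ∈ S, ∑ i ∈ N, u i w ≤ ∑ w ∈ W, ∑ i ∈ N, u i w)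
    (hne : ((Finset.univ : Finset A).powersetCard K).Nonempty) :
    ((∑ j ∈ Finset.range K, α j) / (K * α 0)) *
        ((Finset.univ : Finset A).powersetCard K).sup' hne (owaUtil N u K α) ≤
      owaUtil N u K α W := by
  classical
  -- notation: for a set S and agent i, the sorted (descending) list of utilities
  set L : Finset A → I → List ℝ :=
    fun S i => ((S.1.map (u i)).sort (· ≤ ·)).reverse with hL
  have hlen : ∀ (S : Finset A) i, S.card = K → (L S i).length = K := by
    intro S i hS
    simp [hL, Multiset.length_sort, hS, Finset.card_def]
  have hmemL : ∀ (S : Finset A) i x, x ∈ L S i → 0 ≤ x := by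
    intro S i x hx
    simp only [hL, List.mem_reverse, Multiset.mem_sort, Multiset.mem_map] at hx
    obtain ⟨a, _, rfl⟩ := hx
    exact hu i a
  have hnonnegD : ∀ (S : Finset A) i j, 0 ≤ (L S i).getD j 0 := by
    intro S i j
    by_cases hj : j < (L S i).length
    · rw [List.getD_eq_getElem _ _ hj]
      exact hmemL S i _ (List.getElem_mem _)
    · rw [List.getD_eq_default _ _ (le_of_not_gt hj)]
  have hsum : ∀ (S : Finset A) i, S.card = K →
      ∑ j ∈ Finset.range K, (L S i).getD j 0 = ∑ w ∈ S, u i w := by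
    intro S i hS
    rw [← hlen S i hS, sum_getD_eq]
    show (((S.1.map (u i)).sort (· ≤ ·)).reverse).sum = _
    rw [List.sum_reverse, ← Multiset.sum_coe, Multiset.sort_eq]
    rfl
  have hanti : ∀ (S : Finset A) i j k, j ≤ k → k < (L S i).length →
      (L S i).getD k 0 ≤ (L S i).getD j 0 := by
    intro S i j k hjk hk
    have hj : j < (L S i).length := lt_of_le_of_lt (Nat.lt_succ_iff.mp (Nat.lt_succ_of_le hjk)) hk
    rw [List.getD_eq_getElem _ _ hj, List.getD_eq_getElem _ _ hk]
    rcases eq_or_lt_of_le hjk with rfl | hlt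
    · rfl
    · have hp : (L S i).Pairwise (fun a b => b ≤ a) := by
        rw [hL]
        rw [List.pairwise_reverse]
        exact Multiset.pairwise_sort _ _
      exact List.pairwise_iff_get.mp hp ⟨j, hj⟩ ⟨k, hk⟩ hlt
  -- Step 1: for any size-K set S, owaUtil S ≤ α 0 * total intrinsic utility of S
  have step1 : ∀ S : Finset A, S.card = K →
      owaUtil N u K α S ≤ α 0 * ∑ w ∈ S, ∑ i ∈ N, u i w := by
    intro S hS
    rw [Finset.sum_comm, Finset.mul_sum]
    unfold owaUtil
    refine Finset.sum_le_sum fun i _ => ?_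
    rw [← hsum S i hS, Finset.mul_sum]
    refine Finset.sum_le_sum fun j hj => ?_
    exact mul_le_mul_of_nonneg_right
      (hα_mono 0 j (Nat.zero_le j) (Finset.mem_range.mp hj)) (hnonnegD S i j)
  -- Step 2 (Chebyshev): (∑ α) * total(W) ≤ K * owaUtil W
  have step2 : (∑ j ∈ Finset.range K, α j) * (∑ w ∈ W, ∑ i ∈ N, u i w)
      ≤ K * owaUtil N u K α W := by
    rw [Finset.sum_comm (s := W), Finset.mul_sum]
    unfold owaUtil
    rw [Finset.mul_sum]
    refine Finset.sum_le_sum fun i _ => ?_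
    rw [← hsum W i hWcard]
    have hmono : MonovaryOn α (fun j => (L W i).getD j 0) (Finset.range K : Set ℕ) := by
      intro j hj k hk hlt
      simp only [Finset.coe_range, Set.mem_Iio] at hj hk
      have hkj : k ≤ j := by
        by_contra h
        push_neg at h
        exact absurd (hanti W i j k h.le (by rw [hlen W i hWcard]; exact hk)) (not_le.mpr hlt)
      exact hα_mono k j hkj hj
    have := hmono.sum_mul_sum_le_card_mul_sum
    simpa using this
  -- Step 3: combine
  set T := ∑ w ∈ W, ∑ i ∈ N, u i w with hT
  have hOPT : ((Finset.univ : Finset A).powersetCard K).sup' hne (owaUtil N u K α)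
      ≤ α 0 * T := by
    refine Finset.sup'_le _ _ fun S hS => ?_
    have hScard : S.card = K := (Finset.mem_powersetCard.mp hS).2
    calc owaUtil N u K α S ≤ α 0 * ∑ w ∈ S, ∑ i ∈ N, u i w := step1 S hScard
      _ ≤ α 0 * T := by
          exact mul_le_mul_of_nonneg_left (hWopt S hScard) hα1.le
  have hαsum : 0 ≤ ∑ j ∈ Finset.range K, α j :=
    Finset.sum_nonneg fun j hj => hα_nonneg j (Finset.mem_range.mp hj)
  have hKpos : (0 : ℝ) < K := by exact_mod_cast hK
  rw [div_mul_eq_mul_div, div_le_iff₀ (by positivity)]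
  nlinarith [mul_le_mul_of_nonneg_left hOPT hαsum,
    mul_le_mul_of_nonneg_left step2 hα1.le]
end

section
/- Let K ≥ 2, λ ∈ [0,1], and let h = (λ, 0, …, 0, 1−λ) be the Hurwicz[λ] OWA of length K, so that u^h(W) = Σ_{i∈N} (λ · max_{w∈W} u_{i,w} + (1−λ) · min_{w∈W} u_{i,w}) for every W ⊆ A with |W| = K. Let β ∈ [0,1] and suppose W ⊆ A with |W| = K satisfies u^{1-best}(W) ≥ β · max_{S ⊆ A, |S| = K} u^{1-best}(S). Then u^h(W) ≥ λ·β · max_{S ⊆ A, |S| = K} u^h(S). -/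
open Finset

lemma mem_sort_iff {A : Type*} [DecidableEq A] (S : Finset A) (f : A → ℝ) (x : ℝ) :
    x ∈ (S.1.map f).sort (· ≤ ·) ↔ ∃ a ∈ S, f a = x := by
  rw [← Multiset.mem_coe, Multiset.sort_eq, Multiset.mem_map]
  simp only [Finset.mem_val]

lemma list_max_of_sorted {A : Type*} [DecidableEq A] (S : Finset A) (h : S.Nonempty)
    (f : A → ℝ) (i : ℕ) (hi : i < ((S.1.map f).sort (· ≤ ·)).length)
    (hlast : i = ((S.1.map f).sort (· ≤ ·)).length - 1) :
    ((S.1.map f).sort (· ≤ ·))[i] = S.sup' h f := by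
  apply le_antisymm
  · obtain ⟨a, ha, hfa⟩ := (mem_sort_iff S f _).mp (List.getElem_mem hi)
    rw [← hfa]; exact Finset.le_sup' f ha
  · apply Finset.sup'_le
    intro a ha
    obtain ⟨k, hk, hkeq⟩ := List.mem_iff_getElem.mp ((mem_sort_iff S f _).mpr ⟨a, ha, rfl⟩)
    rw [← hkeq]
    have := (Multiset.pairwise_sort (S.1.map f) (· ≤ ·)).rel_get_of_le
      (a := ⟨k, hk⟩) (b := ⟨i, hi⟩) (by simp only [Fin.mk_le_mk]; omega)
    simpa using this

lemma list_min_of_sorted {A : Type*} [DecidableEq A] (S : Finset A) (h : S.Nonempty)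
    (f : A → ℝ) (i : ℕ) (hi : i < ((S.1.map f).sort (· ≤ ·)).length)
    (hfirst : i = 0) :
    ((S.1.map f).sort (· ≤ ·))[i] = S.inf' h f := by
  apply le_antisymm
  · apply Finset.le_inf'
    intro a ha
    obtain ⟨k, hk, hkeq⟩ := List.mem_iff_getElem.mp ((mem_sort_iff S f _).mpr ⟨a, ha, rfl⟩)
    rw [← hkeq]
    have := (Multiset.pairwise_sort (S.1.map f) (· ≤ ·)).rel_get_of_le
      (a := ⟨i, hi⟩) (b := ⟨k, hk⟩) (by simp only [Fin.mk_le_mk]; omega)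
    simpa using this
  · obtain ⟨a, ha, hfa⟩ := (mem_sort_iff S f _).mp (List.getElem_mem hi)
    rw [← hfa]; exact Finset.inf'_le f ha

lemma len_sort {A : Type*} [DecidableEq A] (S : Finset A) (f : A → ℝ) :
    ((S.1.map f).sort (· ≤ ·)).length = S.card := by simp

lemma getD_rev_max {A : Type*} [DecidableEq A] (S : Finset A) (h : S.Nonempty) (f : A → ℝ) :
    ((S.1.map f).sort (· ≤ ·)).reverse.getD 0 0 = S.sup' h f := by
  have hlen := len_sort S f
  have hpos : 0 < S.card := Finset.card_pos.mpr h
  have h0 : (0:ℕ) < ((S.1.map f).sort (· ≤ ·)).reverse.length := by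
    rw [List.length_reverse, hlen]; omega
  rw [List.getD_eq_getElem _ _ h0, List.getElem_reverse]
  exact list_max_of_sorted S h f _ _ (by omega)

lemma getD_rev_min {A : Type*} [DecidableEq A] (S : Finset A) (h : S.Nonempty) (f : A → ℝ) :
    ((S.1.map f).sort (· ≤ ·)).reverse.getD (S.card - 1) 0 = S.inf' h f := by
  have hlen := len_sort S f
  have hpos : 0 < S.card := Finset.card_pos.mpr h
  have h0 : S.card - 1 < ((S.1.map f).sort (· ≤ ·)).reverse.length := by
    rw [List.length_reverse, hlen]; omega
  rw [List.getD_eq_getElem _ _ h0, List.getElem_reverse]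
  exact list_min_of_sorted S h f _ _ (by omega)

lemma owa_two_point {I A : Type*} [DecidableEq A] (N : Finset I) (u : I → A → ℝ)
    (K : ℕ) (hK : 2 ≤ K) (lam : ℝ) (S : Finset A) (hS : S.card = K) :
    owaUtil N u K (fun j => if j = 0 then lam else if j = K - 1 then 1 - lam else 0) S =
      ∑ i ∈ N, (lam * S.sup' (Finset.card_pos.mp (by omega)) (u i) +
        (1 - lam) * S.inf' (Finset.card_pos.mp (by omega)) (u i)) := by
  apply Finset.sum_congr rfl
  intro i _
  have hne : S.Nonempty := Finset.card_pos.mp (by omega)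
  have hKne : (0:ℕ) ≠ K - 1 := by omega
  have hsplit : ∀ j ∈ Finset.range K,
      (if j = 0 then lam else if j = K - 1 then 1 - lam else 0) *
        (((S.1.map (u i)).sort (· ≤ ·)).reverse.getD j 0) =
      (if j = 0 then lam * (((S.1.map (u i)).sort (· ≤ ·)).reverse.getD j 0) else 0) +
      (if j = K - 1 then (1 - lam) * (((S.1.map (u i)).sort (· ≤ ·)).reverse.getD j 0) else 0) := by
    intro j _
    by_cases h0 : j = 0
    · subst h0
      rw [if_pos rfl, if_pos rfl, if_neg (by omega : ¬((0:ℕ) = K - 1)), add_zero]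
    · by_cases h1 : j = K - 1
      · subst h1
        rw [if_neg h0, if_pos rfl, if_neg h0, if_pos rfl, zero_add]
      · simp [h0, h1]
  rw [Finset.sum_congr rfl hsplit, Finset.sum_add_distrib,
    Finset.sum_ite_eq' (Finset.range K) 0, Finset.sum_ite_eq' (Finset.range K) (K-1)]
  simp only [Finset.mem_range, (by omega : 0 < K), (by omega : K - 1 < K), if_true]
  rw [getD_rev_max S hne (u i)]
  rw [show K - 1 = S.card - 1 by omega, getD_rev_min S hne (u i)]

lemma owa_one_best {I A : Type*} [DecidableEq A] (N : Finset I) (u : I → A → ℝ)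
    (K : ℕ) (hK : 1 ≤ K) (S : Finset A) (hS : S.card = K) :
    owaUtil N u K (fun j => if j = 0 then (1:ℝ) else 0) S =
      ∑ i ∈ N, S.sup' (Finset.card_pos.mp (by omega)) (u i) := by
  apply Finset.sum_congr rfl
  intro i _
  have hne : S.Nonempty := Finset.card_pos.mp (by omega)
  have : ∀ j ∈ Finset.range K,
      (if j = 0 then (1:ℝ) else 0) * (((S.1.map (u i)).sort (· ≤ ·)).reverse.getD j 0) =
      (if j = 0 then (((S.1.map (u i)).sort (· ≤ ·)).reverse.getD j 0) else 0) := by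
    intro j _; by_cases h0 : j = 0 <;> simp [h0]
  rw [Finset.sum_congr rfl this, Finset.sum_ite_eq' (Finset.range K) 0]
  simp only [Finset.mem_range, (by omega : 0 < K), if_true]
  exact getD_rev_max S hne (u i)

/-- A `β`-approximate solution `W` for `1`-best-OWA-Winner is a `λ·β`-approximate
solution for `Hurwicz[λ]`-OWA-Winner, where the Hurwicz OWA of length `K ≥ 2` is
`(λ, 0, …, 0, 1 − λ)`, so that `u^h(W) = ∑_i (λ·max_{w∈W} u_{i,w} + (1−λ)·min_{w∈W} u_{i,w})`
for every size-`K` set `W`. -/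
theorem stmt_4 {I A : Type*} [DecidableEq A] [Fintype A]
    (N : Finset I) (u : I → A → ℝ) (hu : ∀ i a, 0 ≤ u i a)
    (K : ℕ) (hK : 2 ≤ K) (hKm : K ≤ Fintype.card A)
    (lam : ℝ) (hlam : lam ∈ Set.Icc (0 : ℝ) 1)
    (β : ℝ) (hβ : β ∈ Set.Icc (0 : ℝ) 1)
    (hne : ((Finset.univ : Finset A).powersetCard K).Nonempty)
    (W : Finset A) (hWcard : W.card = K)
    (hWapx : β * ((Finset.univ : Finset A).powersetCard K).sup' hne
          (owaUtil N u K (fun j => if j = 0 then (1 : ℝ) else 0)) ≤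
        owaUtil N u K (fun j => if j = 0 then (1 : ℝ) else 0) W) :
    (∀ S : Finset A, ∀ hS : S.card = K,
      owaUtil N u K (fun j => if j = 0 then lam else if j = K - 1 then 1 - lam else 0) S =
        ∑ i ∈ N, (lam * S.sup' (Finset.card_pos.mp (by omega)) (u i) +
          (1 - lam) * S.inf' (Finset.card_pos.mp (by omega)) (u i))) ∧
    lam * β * ((Finset.univ : Finset A).powersetCard K).sup' hne
        (owaUtil N u K (fun j => if j = 0 then lam else if j = K - 1 then 1 - lam else 0)) ≤
      owaUtil N u K (fun j => if j = 0 then lam else if j = K - 1 then 1 - lam else 0) W := by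
  obtain ⟨hl0, hl1⟩ := hlam
  obtain ⟨hb0, hb1⟩ := hβ
  refine ⟨fun S hS => owa_two_point N u K hK lam S hS, ?_⟩
  set α1 : ℕ → ℝ := fun j => if j = 0 then (1 : ℝ) else 0 with hα1
  set αh : ℕ → ℝ := fun j => if j = 0 then lam else if j = K - 1 then 1 - lam else 0 with hαh
  -- every size-K set dominated by 1-best value
  have hdom : ∀ S : Finset A, S.card = K →
      owaUtil N u K αh S ≤ owaUtil N u K α1 S := by
    intro S hS
    have hSne : S.Nonempty := Finset.card_pos.mp (by omega)
    rw [owa_two_point N u K hK lam S hS, owa_one_best N u K (by omega) S hS]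
    apply Finset.sum_le_sum
    intro i _
    obtain ⟨a0, ha0⟩ := id hSne
    have h1 : S.inf' hSne (u i) ≤ S.sup' hSne (u i) :=
      le_trans (Finset.inf'_le _ ha0) (Finset.le_sup' _ ha0)
    have h2 : (1 - lam) * S.inf' hSne (u i) ≤ (1 - lam) * S.sup' hSne (u i) :=
      mul_le_mul_of_nonneg_left h1 (by linarith)
    have hp : S.inf' (Finset.card_pos.mp (by omega : 0 < S.card)) (u i) = S.inf' hSne (u i) := rfl
    linarith [h2]
  have hsup : ((Finset.univ : Finset A).powersetCard K).sup' hne (owaUtil N u K αh) ≤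
      ((Finset.univ : Finset A).powersetCard K).sup' hne (owaUtil N u K α1) := by
    apply Finset.sup'_le
    intro S hSmem
    exact le_trans (hdom S (Finset.mem_powersetCard.mp hSmem).2)
      (Finset.le_sup' (owaUtil N u K α1) hSmem)
  have hWne : W.Nonempty := Finset.card_pos.mp (by omega)
  have hstep2 : lam * owaUtil N u K α1 W ≤ owaUtil N u K αh W := by
    rw [owa_two_point N u K hK lam W hWcard, owa_one_best N u K (by omega) W hWcard,
      Finset.mul_sum]
    apply Finset.sum_le_sum
    intro i _
    have hinf : 0 ≤ W.inf' hWne (u i) := Finset.le_inf' hWne (u i) (fun a _ => hu i a)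
    have := mul_nonneg (by linarith : (0:ℝ) ≤ 1 - lam) hinf
    have hp : W.inf' (Finset.card_pos.mp (by omega : 0 < W.card)) (u i) = W.inf' hWne (u i) := rfl
    linarith
  calc lam * β * ((Finset.univ : Finset A).powersetCard K).sup' hne (owaUtil N u K αh)
      ≤ lam * β * ((Finset.univ : Finset A).powersetCard K).sup' hne (owaUtil N u K α1) :=
        mul_le_mul_of_nonneg_left hsup (mul_nonneg hl0 hb0)
    _ = lam * (β * ((Finset.univ : Finset A).powersetCard K).sup' hne (owaUtil N u K α1)) := by
        ring
    _ ≤ lam * owaUtil N u K α1 W := mul_le_mul_of_nonneg_left hWapx hl0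
    _ ≤ owaUtil N u K αh W := hstep2
end

section
/- Let G = (V, E) be a graph with |V| = m and |E| = n, and let K be an integer with 3 ≤ K ≤ m−1. Consider the OWA-Winner instance whose items are V, whose agents are, for each edge e = {v, v'} ∈ E, two agents e^1 and e^2, where e^1 has utility 1 exactly for v and v' (and 0 elsewhere) and e^2 has utility 1 exactly for the items of V ∖ {v, v'} (and 0 on v and v'), with committee size K and the (K−1)-best OWA (K−1 ones followed by one zero). Then for every W ⊆ V with |W| = K, u^{(K−1)-best}(W) = (K−1)·n + |{e ∈ E : e ∩ W ≠ ∅}|. Consequently, the maximum of u^{(K−1)-best} over size-K subsets of V equals K·n if and only if G has a vertex cover of size at most K. -/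
open Finset

open scoped Classical

/-- The total utility of a size-`K` committee `W ⊆ V` in the instance obtained from a
graph `G`: agents are the pairs `(e, 0)` and `(e, 1)` for edges `e`, where `(e, 0)`
approves exactly the endpoints of `e` and `(e, 1)` approves exactly the non-endpoints,
and the OWA is the `(K−1)`-best one. -/
noncomputable def stmt7util {V : Type*} [Fintype V] [DecidableEq V]
    (G : SimpleGraph V) [DecidableRel G.Adj] (K : ℕ) : Finset V → ℝ :=
  owaUtil (G.edgeFinset ×ˢ (Finset.univ : Finset (Fin 2)))
    (fun q v =>
      if q.2 = 0 then (if v ∈ q.1 then (1 : ℝ) else 0)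
      else (if v ∈ q.1 then (0 : ℝ) else 1))
    K (fun j => if j < K - 1 then (1 : ℝ) else 0)

section myaux
open scoped Classical

private lemma my_rep_getD (c d j : ℕ) :
    (List.replicate c (1:ℝ) ++ List.replicate d 0).getD j 0 = if j < c then 1 else 0 := by
  by_cases h : j < c
  · rw [List.getD_append _ _ _ _ (by simpa using h), if_pos h,
      List.getD_eq_getElem _ _ (by simpa using h), List.getElem_replicate]
  · rw [List.getD_append_right _ _ _ _ (by simpa using not_lt.mp h), if_neg h]
    by_cases h2 : j - c < d
    · rw [List.getD_eq_getElem _ _ (by simpa using h2), List.getElem_replicate]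
    · rw [List.getD_eq_default _ _ (by simpa using not_lt.mp h2)]

private lemma my_sort_rev (c d : ℕ) (s : Multiset ℝ)
    (hs : s = Multiset.replicate c 1 + Multiset.replicate d 0) :
    (s.sort (· ≤ ·)).reverse = List.replicate c (1:ℝ) ++ List.replicate d 0 := by
  haveI : IsAntisymm ℝ (fun a b : ℝ => a ≥ b) := ⟨fun a b h h' => le_antisymm h' h⟩
  refine (fun hp h1 h2 => List.Perm.eq_of_pairwise' (r := fun a b : ℝ => a ≥ b) h1 h2 hp) ?_ ?_ ?_
  · refine (List.reverse_perm _).trans ?_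
    rw [← Multiset.coe_eq_coe]
    rw [Multiset.sort_eq, hs]
    rw [← Multiset.coe_add, Multiset.coe_replicate, Multiset.coe_replicate]
  · rw [List.pairwise_reverse]
    have := Multiset.pairwise_sort (α := ℝ) (s := s) (r := (· ≤ ·))
    exact this
  · rw [List.pairwise_append]
    refine ⟨List.pairwise_replicate.mpr (Or.inr le_rfl),
      List.pairwise_replicate.mpr (Or.inr le_rfl), fun a ha b hb => ?_⟩
    rw [List.eq_of_mem_replicate ha, List.eq_of_mem_replicate hb]
    norm_num

private lemma my_agent_sum {V : Type*} [DecidableEq V] (K : ℕ) (W : Finset V) (hW : W.card = K)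
    (u : V → ℝ) (P : V → Prop) [DecidablePred P] (hu : ∀ v, u v = if P v then 1 else 0)
    (c : ℕ) (hcard : (W.filter P).card = c) :
    ∑ j ∈ Finset.range K, (if j < K - 1 then (1:ℝ) else 0) *
      ((W.1.map u).sort (· ≤ ·)).reverse.getD j 0
    = (min c (K - 1) : ℕ) := by
  have hc : c ≤ K := hcard ▸ hW ▸ (card_filter_le W P)
  have hcc : c + (W.filter (fun v => ¬ P v)).card = K := by
    rw [← hcard]
    exact hW ▸ card_filter_add_card_filter_not (s := W) (p := P)
  have hs : W.1.map u = Multiset.replicate c 1 + Multiset.replicate (K - c) 0 := by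
    have hsplit : W.1.filter P + W.1.filter (fun v => ¬ P v) = W.1 :=
      Multiset.filter_add_not _ _
    rw [← hsplit, Multiset.map_add]
    congr 1
    · rw [Multiset.eq_replicate]
      constructor
      · rw [← hcard]
        simp [Finset.card, Finset.filter]
      · intro b hb
        obtain ⟨v, hv, rfl⟩ := Multiset.mem_map.mp hb
        rw [hu v, if_pos (Multiset.of_mem_filter hv)]
    · rw [Multiset.eq_replicate]
      constructor
      · have : (W.filter (fun v => ¬ P v)).card = K - c := by omega
        simpa [Finset.card, Finset.filter] using this
      · intro b hb
        obtain ⟨v, hv, rfl⟩ := Multiset.mem_map.mp hb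
        have := Multiset.of_mem_filter hv
        rw [hu v, if_neg this]
  rw [hs, my_sort_rev c (K - c) _ rfl]
  have : ∀ j ∈ Finset.range K,
      (if j < K - 1 then (1:ℝ) else 0) *
        (List.replicate c (1:ℝ) ++ List.replicate (K - c) 0).getD j 0
      = if j < min c (K - 1) then 1 else 0 := by
    intro j _
    rw [my_rep_getD]
    by_cases h1 : j < c <;> by_cases h2 : j < K - 1 <;>
      simp [h1, h2, Nat.lt_min] <;> omega
  rw [Finset.sum_congr rfl this, Finset.sum_boole]
  have hfil : (Finset.range K).filter (fun j => j < min c (K - 1)) = Finset.range (min c (K - 1)) := by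
    ext j; simp only [mem_filter, mem_range]; omega
  rw [hfil, card_range, Nat.cast_min]

end myaux

section myaux2
open scoped Classical

private lemma my_edge_sum {V : Type*} [DecidableEq V] (K : ℕ) (hK : 3 ≤ K)
    (W : Finset V) (hW : W.card = K) (e : Sym2 V) :
    (∑ j ∈ Finset.range K, (if j < K - 1 then (1:ℝ) else 0) *
      (((W.1.map (fun v => if v ∈ e then (1:ℝ) else 0)).sort (· ≤ ·)).reverse.getD j 0))
    + (∑ j ∈ Finset.range K, (if j < K - 1 then (1:ℝ) else 0) *
      (((W.1.map (fun v => if v ∈ e then (0:ℝ) else 1)).sort (· ≤ ·)).reverse.getD j 0))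
    = ((K:ℝ) - 1) + (if ∃ v ∈ W, v ∈ e then 1 else 0) := by
  rw [my_agent_sum K W hW (fun v => if v ∈ e then (1:ℝ) else 0) (fun v => v ∈ e)
        (fun v => by by_cases h : v ∈ e <;> simp [h])
        ((W.filter (fun v => v ∈ e)).card) rfl,
      my_agent_sum K W hW (fun v => if v ∈ e then (0:ℝ) else 1) (fun v => ¬ (v ∈ e))
        (fun v => by by_cases h : v ∈ e <;> simp [h])
        (K - (W.filter (fun v => v ∈ e)).card)
        (by
          have := hW ▸ Finset.card_filter_add_card_filter_not (s := W)
            (p := fun v => v ∈ e)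
          omega)]
  set c := (W.filter (fun v => v ∈ e)).card with hcdef
  have hc2 : c ≤ 2 := by
    induction e with
    | _ a b =>
      have hsub : W.filter (· ∈ s(a, b)) ⊆ {a, b} := by
        intro v hv
        have := (Finset.mem_filter.mp hv).2
        rw [Sym2.mem_iff] at this
        simpa using this
      calc c ≤ ({a, b} : Finset V).card := Finset.card_le_card hsub
        _ ≤ 2 := Finset.card_insert_le _ _ |>.trans (by simp)
  have hcK : c ≤ K := hcdef ▸ hW ▸ Finset.card_filter_le W _
  have hex : (∃ v ∈ W, v ∈ e) ↔ 0 < c := by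
    rw [hcdef, Finset.card_pos, Finset.filter_nonempty_iff]
  by_cases h0 : c = 0
  · rw [show min c (K - 1) = 0 by omega, show min (K - c) (K - 1) = K - 1 by omega,
      if_neg (by rw [hex]; omega)]
    push_cast [Nat.cast_sub (by omega : 1 ≤ K)]
    ring
  · rw [show min c (K - 1) = c by omega, show min (K - c) (K - 1) = K - c by omega,
      if_pos (hex.mpr (by omega))]
    push_cast [Nat.cast_sub (by omega : c ≤ K)]
    ring

end myaux2

/-- Correctness of the reduction from VertexCover to `(K−1)`-best-OWA-Winner with
approval utilities: every size-`K` set `W ⊆ V` has utility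
`(K−1)·n + #{e ∈ E : e ∩ W ≠ ∅}`; consequently the maximum utility over size-`K`
sets equals `K·n` iff `G` has a vertex cover of size at most `K`. -/
theorem stmt_7 {V : Type*} [Fintype V] [DecidableEq V]
    (G : SimpleGraph V) [DecidableRel G.Adj]
    (m n K : ℕ) (hm : Fintype.card V = m) (hn : G.edgeFinset.card = n)
    (hK : 3 ≤ K) (hKm : K ≤ m - 1)
    (hne : ((Finset.univ : Finset V).powersetCard K).Nonempty) :
    (∀ W : Finset V, W.card = K →
      stmt7util G K W =
        ((K : ℝ) - 1) * (n : ℝ) +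
          ((G.edgeFinset.filter (fun e => ∃ v ∈ W, v ∈ e)).card : ℝ)) ∧
    ((((Finset.univ : Finset V).powersetCard K).sup' hne (stmt7util G K) =
        (K : ℝ) * (n : ℝ)) ↔
      ∃ C : Finset V, C.card ≤ K ∧ ∀ e ∈ G.edgeFinset, ∃ v ∈ C, v ∈ e) := by
  have main : ∀ W : Finset V, W.card = K →
      stmt7util G K W = ((K : ℝ) - 1) * (n : ℝ) +
        ((G.edgeFinset.filter (fun e => ∃ v ∈ W, v ∈ e)).card : ℝ) := by
    intro W hW
    unfold stmt7util owaUtil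
    rw [Finset.sum_product]
    rw [show (∑ e ∈ G.edgeFinset, ∑ b : Fin 2, ∑ j ∈ Finset.range K,
        (if j < K - 1 then (1:ℝ) else 0) *
          (((W.1.map ((fun (q : Sym2 V × Fin 2) v =>
            if q.2 = 0 then (if v ∈ q.1 then (1 : ℝ) else 0)
            else (if v ∈ q.1 then (0 : ℝ) else 1)) (e, b))).sort (· ≤ ·)).reverse.getD j 0))
        = ∑ e ∈ G.edgeFinset, (((K:ℝ) - 1) + (if ∃ v ∈ W, v ∈ e then 1 else 0)) from
      Finset.sum_congr rfl fun e he => by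
        rw [Fin.sum_univ_two,
          show ((fun (q : Sym2 V × Fin 2) v =>
              if q.2 = 0 then (if v ∈ q.1 then (1 : ℝ) else 0)
              else (if v ∈ q.1 then (0 : ℝ) else 1)) (e, (0 : Fin 2)))
            = fun v => if v ∈ e then (1:ℝ) else 0 from funext fun v => by simp,
          show ((fun (q : Sym2 V × Fin 2) v =>
              if q.2 = 0 then (if v ∈ q.1 then (1 : ℝ) else 0)
              else (if v ∈ q.1 then (0 : ℝ) else 1)) (e, (1 : Fin 2)))
            = fun v => if v ∈ e then (0:ℝ) else 1 from funext fun v => by simp]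
        exact my_edge_sum K hK W hW e]
    rw [Finset.sum_add_distrib, Finset.sum_const, Finset.sum_boole, hn, nsmul_eq_mul]
    ring
  refine ⟨main, ?_⟩
  have hub : ∀ W ∈ (Finset.univ : Finset V).powersetCard K,
      stmt7util G K W ≤ (K:ℝ) * n := by
    intro W hWm
    obtain ⟨-, hWc⟩ := Finset.mem_powersetCard.mp hWm
    rw [main W hWc]
    have h1 : ((G.edgeFinset.filter (fun e => ∃ v ∈ W, v ∈ e)).card : ℝ) ≤ n := by
      exact_mod_cast hn ▸ Finset.card_filter_le _ _
    nlinarith [h1]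
  constructor
  · intro hsup
    obtain ⟨W₀, hW₀mem, hW₀⟩ := Finset.exists_mem_eq_sup' hne (stmt7util G K)
    obtain ⟨-, hW₀c⟩ := Finset.mem_powersetCard.mp hW₀mem
    have heq : ((K : ℝ) - 1) * n +
        ((G.edgeFinset.filter (fun e => ∃ v ∈ W₀, v ∈ e)).card : ℝ) = K * n := by
      rw [← main W₀ hW₀c, ← hW₀, hsup]
    have hcov : ((G.edgeFinset.filter (fun e => ∃ v ∈ W₀, v ∈ e)).card : ℝ) = n := by
      nlinarith [heq]
    have hcovn : (G.edgeFinset.filter (fun e => ∃ v ∈ W₀, v ∈ e)).card = n := by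
      exact_mod_cast hcov
    have hfe : G.edgeFinset.filter (fun e => ∃ v ∈ W₀, v ∈ e) = G.edgeFinset :=
      Finset.eq_of_subset_of_card_le (Finset.filter_subset _ _) (by rw [hcovn, hn])
    refine ⟨W₀, le_of_eq hW₀c, fun e he => ?_⟩
    rw [← hfe] at he
    exact (Finset.mem_filter.mp he).2
  · rintro ⟨C, hCK, hCcov⟩
    obtain ⟨W, hCW, hWc⟩ := Finset.exists_superset_card_eq hCK (by omega)
    have hWmem : W ∈ (Finset.univ : Finset V).powersetCard K :=
      Finset.mem_powersetCard.mpr ⟨Finset.subset_univ _, hWc⟩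
    have hcov : G.edgeFinset.filter (fun e => ∃ v ∈ W, v ∈ e) = G.edgeFinset := by
      apply Finset.filter_true_of_mem
      intro e he
      obtain ⟨v, hv, hve⟩ := hCcov e he
      exact ⟨v, hCW hv, hve⟩
    have hval : stmt7util G K W = (K:ℝ) * n := by
      rw [main W hWc, hcov, hn]; ring
    exact le_antisymm (Finset.sup'_le hne _ hub) (hval ▸ Finset.le_sup' _ hWmem)
end

section
/- Fix integers ℓ ≥ 2 and K ≥ 1. Let G = (V, E) be a graph with K ≤ |V|, and let α = (α_1, …, α_{K+ℓ−2}) be a vector of nonnegative reals with α_1 = … = α_{ℓ−1} = 0 and α_ℓ > 0. Consider the OWA-Winner instance whose items are A' = V ∪ {d_1, …, d_{ℓ−2}}, whose agents are the edges of G, where agent e has utility 1 for each d_j and for each of the two endpoints of e and utility 0 otherwise, with committee size K+ℓ−2 and OWA α. Then: (i) for every S ⊆ V with |S| = K, u^α({d_1, …, d_{ℓ−2}} ∪ S) = α_ℓ · |{e ∈ E : both endpoints of e lie in S}|; and (ii) max over W ⊆ A' with |W| = K+ℓ−2 of u^α(W) equals α_ℓ times the maximum number of edges of a K-vertex induced subgraph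 of G. -/
open Finset

open scoped Classical

lemma sort01' (m : Multiset ℝ) (h : ∀ x ∈ m, x = 0 ∨ x = 1) :
    m.sort (· ≤ ·) = List.replicate (Multiset.card m - m.count 1) 0
      ++ List.replicate (m.count 1) 1 := by
  apply fun hp h1 h2 => List.Perm.eq_of_pairwise' (r := (· ≤ · : ℝ → ℝ → Prop)) h1 h2 hp
  · rw [← Multiset.coe_eq_coe, Multiset.sort_eq]
    have h1 : Multiset.filter (fun x => x = 1) m = Multiset.replicate (m.count 1) 1 := by
      have := Multiset.filter_eq m 1
      simpa [eq_comm] using this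
    have h0 : Multiset.filter (fun x => ¬ x = 1) m
        = Multiset.replicate (Multiset.card m - m.count 1) 0 := by
      rw [Multiset.eq_replicate]
      constructor
      · have := congrArg Multiset.card (Multiset.filter_add_not (fun x => x = 1) m)
        rw [Multiset.card_add, h1, Multiset.card_replicate] at this
        omega
      · intro b hb
        rw [Multiset.mem_filter] at hb
        rcases h b hb.1 with h' | h' <;> simp_all
    calc m = Multiset.filter (fun x => x = 1) m + Multiset.filter (fun x => ¬ x = 1) m :=
            (Multiset.filter_add_not _ m).symm
      _ = _ := by
            rw [h1, h0, add_comm, ← Multiset.coe_replicate, ← Multiset.coe_replicate,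
              ← Multiset.coe_add]
  · exact Multiset.pairwise_sort (s := m) _
  · rw [List.pairwise_append]
    refine ⟨List.pairwise_replicate.2 (Or.inr le_rfl),
      List.pairwise_replicate.2 (Or.inr le_rfl), ?_⟩
    intro x hx y hy
    rw [List.eq_of_mem_replicate hx, List.eq_of_mem_replicate hy]; norm_num

lemma getD01' (m : Multiset ℝ) (h : ∀ x ∈ m, x = 0 ∨ x = 1) (j : ℕ) :
    ((m.sort (· ≤ ·)).reverse.getD j 0) = if j < m.count 1 then 1 else 0 := by
  rw [sort01' m h, List.reverse_append, List.reverse_replicate, List.reverse_replicate]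
  by_cases hj : j < m.count 1
  · rw [List.getD_append _ _ _ _ (by simpa using hj), if_pos hj]
    simp [List.getD_eq_getElem, hj]
  · rw [List.getD_append_right _ _ _ _ (by simpa using not_lt.1 hj), if_neg hj]
    rcases lt_or_ge (j - m.count 1) (Multiset.card m - m.count 1) with h' | h'
    · simp [List.getD_eq_getElem, h']
    · simp [List.getD_eq_default, h']

lemma agent_sum' (α : ℕ → ℝ) (ℓ K' : ℕ) (hℓ : 1 ≤ ℓ)
    (hz : ∀ j, j < ℓ - 1 → α j = 0)
    {A : Type*} [DecidableEq A] (W : Finset A) (u : A → ℝ)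
    (hu : ∀ a, u a = 0 ∨ u a = 1)
    (hW : W.card = K') (hc : (W.filter (fun w => u w = 1)).card ≤ ℓ) :
    ∑ j ∈ Finset.range K', α j * (((W.1.map u).sort (· ≤ ·)).reverse.getD j 0)
      = if (W.filter (fun w => u w = 1)).card = ℓ then α (ℓ-1) else 0 := by
  set c := (W.filter (fun w => u w = 1)).card with hcdef
  have hcount : (W.1.map u).count 1 = c := by
    rw [Multiset.count_map, hcdef, Finset.card, Finset.filter_val]
    congr 1
    simp [eq_comm]
  have hcK : c ≤ K' := hW ▸ Finset.card_filter_le _ _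
  have hmem : ∀ x ∈ W.1.map u, x = 0 ∨ x = 1 := by
    intro x hx
    rw [Multiset.mem_map] at hx
    obtain ⟨a, _, ha⟩ := hx
    subst ha; exact hu a
  have hstep : ∀ j, α j * (((W.1.map u).sort (· ≤ ·)).reverse.getD j 0)
      = if j < c then α j else 0 := by
    intro j
    rw [getD01' _ hmem j, hcount]
    split <;> simp
  simp only [hstep]
  rw [← Finset.sum_filter]
  have hfr : (Finset.range K').filter (fun j => j < c) = Finset.range c := by
    ext j; simp only [Finset.mem_filter, Finset.mem_range]; omega
  rw [hfr]
  by_cases hcl : c = ℓ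
  · rw [if_pos hcl, hcl]
    rw [show ℓ = (ℓ-1)+1 by omega, Finset.sum_range_succ,
      Finset.sum_eq_zero (fun j hj => hz j (Finset.mem_range.1 hj)), zero_add,
      Nat.add_sub_cancel]
  · rw [if_neg hcl]
    exact Finset.sum_eq_zero (fun j hj => hz j (by have := Finset.mem_range.1 hj; omega))

lemma c_split' {V : Type*} [DecidableEq V] (n : ℕ) (e : Sym2 V)
    (W : Finset (V ⊕ Fin n)) :
    (W.filter (fun w => Sum.elim (fun v => if v ∈ e then (1:ℝ) else 0)
        (fun _ => (1:ℝ)) w = 1)).card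
      = (W.toLeft.filter (· ∈ e)).card + W.toRight.card := by
  set P := fun w => Sum.elim (fun v => if v ∈ e then (1:ℝ) else 0) (fun _ => (1:ℝ)) w = 1
  rw [← Finset.card_toLeft_add_card_toRight (u := W.filter P)]
  congr 1
  · congr 1
    ext v
    simp only [Finset.mem_toLeft, Finset.mem_filter, P, Sum.elim_inl]
    split_ifs <;> simp_all
  · congr 1
    ext d
    simp [Finset.mem_toRight, Finset.mem_filter, P]

lemma t_facts' {V : Type*} [Fintype V] [DecidableEq V] (G : SimpleGraph V)
    [DecidableRel G.Adj] (e : Sym2 V) (he : e ∈ G.edgeFinset) (S : Finset V) :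
    (S.filter (· ∈ e)).card ≤ 2 ∧
    ((S.filter (· ∈ e)).card = 2 ↔ ∀ v ∈ e, v ∈ S) := by
  induction e using Sym2.ind with
  | _ a b =>
    have hab : a ≠ b := by
      rw [SimpleGraph.mem_edgeFinset, SimpleGraph.mem_edgeSet] at he
      exact G.ne_of_adj he
    have hfe : S.filter (· ∈ (s(a,b) : Sym2 V)) = S ∩ {a, b} := by
      ext v
      simp [Sym2.mem_iff, Finset.mem_inter, Finset.mem_insert]
    have hcard2 : ({a, b} : Finset V).card = 2 := Finset.card_pair hab
    constructor
    · rw [hfe]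
      exact le_trans (Finset.card_le_card (Finset.inter_subset_right)) hcard2.le
    · rw [hfe]
      constructor
      · intro h2
        have heq : S ∩ {a, b} = {a, b} :=
          Finset.eq_of_subset_of_card_le Finset.inter_subset_right (by omega)
        have hsub : ({a, b} : Finset V) ⊆ S := by
          rw [← heq]; exact Finset.inter_subset_left
        intro v hv
        rw [Sym2.mem_iff] at hv
        rcases hv with rfl | rfl
        · exact hsub (by simp)
        · exact hsub (by simp)
      · intro h
        have ha : a ∈ S := h a (by simp)
        have hb : b ∈ S := h b (by simp)
        have : S ∩ {a, b} = {a, b} := by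
          apply Finset.inter_eq_right.2
          intro v hv
          simp only [Finset.mem_insert, Finset.mem_singleton] at hv
          rcases hv with rfl | rfl <;> assumption
        rw [this, hcard2]


/-- Correctness of the reduction from Densest-k-Subgraph: items are the vertices of `G`
plus `ℓ − 2` dummy items, agents are the edges (an edge has utility `1` for each dummy
and each of its endpoints), the committee size is `K + ℓ − 2`, and the OWA `α` has
`α_1 = … = α_{ℓ−1} = 0` and `α_ℓ > 0` (0-indexed: `α j = 0` for `j < ℓ − 1` and
`0 < α (ℓ−1)`). Then (i) for every size-`K` set `S ⊆ V`, the committee consisting of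
`S` and all dummies has utility `α_ℓ · #{e : both endpoints of e lie in S}`, and
(ii) the optimal utility equals `α_ℓ` times the maximum edge count of a `K`-vertex
induced subgraph. -/
theorem stmt_10 {V : Type*} [Fintype V] [DecidableEq V]
    (G : SimpleGraph V) [DecidableRel G.Adj]
    (ℓ K : ℕ) (hℓ : 2 ≤ ℓ) (hK : 1 ≤ K) (hKV : K ≤ Fintype.card V)
    (α : ℕ → ℝ)
    (hα_nonneg : ∀ j, j < K + ℓ - 2 → 0 ≤ α j)
    (hα_zero : ∀ j, j < ℓ - 1 → α j = 0)
    (hα_pos : 0 < α (ℓ - 1))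
    (hne1 : ((Finset.univ : Finset (V ⊕ Fin (ℓ - 2))).powersetCard (K + ℓ - 2)).Nonempty)
    (hne2 : ((Finset.univ : Finset V).powersetCard K).Nonempty) :
    (∀ S : Finset V, S.card = K →
      owaUtil G.edgeFinset
        (fun (e : Sym2 V) (x : V ⊕ Fin (ℓ - 2)) =>
          Sum.elim (fun v => if v ∈ e then (1 : ℝ) else 0) (fun _ => (1 : ℝ)) x)
        (K + ℓ - 2) α
        (S.image Sum.inl ∪ (Finset.univ : Finset (Fin (ℓ - 2))).image Sum.inr) =
      α (ℓ - 1) * ((G.edgeFinset.filter (fun e => ∀ v ∈ e, v ∈ S)).card : ℝ)) ∧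
    ((Finset.univ : Finset (V ⊕ Fin (ℓ - 2))).powersetCard (K + ℓ - 2)).sup' hne1
        (owaUtil G.edgeFinset
          (fun (e : Sym2 V) (x : V ⊕ Fin (ℓ - 2)) =>
            Sum.elim (fun v => if v ∈ e then (1 : ℝ) else 0) (fun _ => (1 : ℝ)) x)
          (K + ℓ - 2) α) =
      α (ℓ - 1) *
        ((Finset.univ : Finset V).powersetCard K).sup' hne2
          (fun S => ((G.edgeFinset.filter (fun e => ∀ v ∈ e, v ∈ S)).card : ℝ)) := by
  have hu01 : ∀ (e : Sym2 V) (a : V ⊕ Fin (ℓ - 2)),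
      (Sum.elim (fun v => if v ∈ e then (1:ℝ) else 0) (fun _ => (1:ℝ)) a) = 0 ∨
      (Sum.elim (fun v => if v ∈ e then (1:ℝ) else 0) (fun _ => (1:ℝ)) a) = 1 := by
    rintro e (v | d)
    · simp only [Sum.elim_inl]; split_ifs <;> simp
    · simp
  have hmain : ∀ W : Finset (V ⊕ Fin (ℓ - 2)), W.card = K + ℓ - 2 →
      owaUtil G.edgeFinset
        (fun (e : Sym2 V) (x : V ⊕ Fin (ℓ - 2)) =>
          Sum.elim (fun v => if v ∈ e then (1 : ℝ) else 0) (fun _ => (1 : ℝ)) x)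
        (K + ℓ - 2) α W
      = α (ℓ - 1) *
        ((G.edgeFinset.filter
          (fun e => (W.toLeft.filter (· ∈ e)).card + W.toRight.card = ℓ)).card : ℝ) := by
    intro W hWc
    have hD : W.toRight.card ≤ ℓ - 2 := by
      have := Finset.card_le_univ W.toRight
      simpa using this
    simp only [owaUtil]
    have step : ∀ e ∈ G.edgeFinset,
        (∑ j ∈ Finset.range (K + ℓ - 2), α j *
          (((W.1.map (fun x => Sum.elim (fun v => if v ∈ e then (1:ℝ) else 0)
              (fun _ => (1:ℝ)) x)).sort (· ≤ ·)).reverse.getD j 0))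
        = if (W.toLeft.filter (· ∈ e)).card + W.toRight.card = ℓ
            then α (ℓ - 1) else 0 := by
      intro e he
      have ht := (t_facts' G e he W.toLeft).1
      have hcle : (W.filter (fun w => Sum.elim (fun v => if v ∈ e then (1:ℝ) else 0)
          (fun _ => (1:ℝ)) w = 1)).card ≤ ℓ := by
        rw [c_split']
        omega
      rw [agent_sum' α ℓ (K + ℓ - 2) (by omega) hα_zero W _ (hu01 e) hWc hcle, c_split']
    rw [Finset.sum_congr rfl step, ← Finset.sum_filter, Finset.sum_const,
      nsmul_eq_mul, mul_comm]
  have hcardW : ∀ S : Finset V, S.card = K →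
      (S.image Sum.inl ∪ (Finset.univ : Finset (Fin (ℓ - 2))).image Sum.inr).card
        = K + ℓ - 2 := by
    intro S hS
    have htl : (S.image Sum.inl ∪
        (Finset.univ : Finset (Fin (ℓ - 2))).image Sum.inr).toLeft = S := by
      ext v; simp
    have htr : (S.image Sum.inl ∪
        (Finset.univ : Finset (Fin (ℓ - 2))).image Sum.inr).toRight = Finset.univ := by
      ext d; simp
    rw [← Finset.card_toLeft_add_card_toRight, htl, htr, hS]
    simp only [Finset.card_univ, Fintype.card_fin]
    omega
  have parti : ∀ S : Finset V, S.card = K →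
      owaUtil G.edgeFinset
        (fun (e : Sym2 V) (x : V ⊕ Fin (ℓ - 2)) =>
          Sum.elim (fun v => if v ∈ e then (1 : ℝ) else 0) (fun _ => (1 : ℝ)) x)
        (K + ℓ - 2) α
        (S.image Sum.inl ∪ (Finset.univ : Finset (Fin (ℓ - 2))).image Sum.inr) =
      α (ℓ - 1) * ((G.edgeFinset.filter (fun e => ∀ v ∈ e, v ∈ S)).card : ℝ) := by
    intro S hS
    have htl : (S.image Sum.inl ∪
        (Finset.univ : Finset (Fin (ℓ - 2))).image Sum.inr).toLeft = S := by
      ext v; simp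
    have htr : (S.image Sum.inl ∪
        (Finset.univ : Finset (Fin (ℓ - 2))).image Sum.inr).toRight = Finset.univ := by
      ext d; simp
    rw [hmain _ (hcardW S hS), htl, htr]
    have hfilt : G.edgeFinset.filter
        (fun e => (S.filter (· ∈ e)).card + (Finset.univ : Finset (Fin (ℓ - 2))).card = ℓ)
        = G.edgeFinset.filter (fun e => ∀ v ∈ e, v ∈ S) := by
      apply Finset.filter_congr
      intro e he
      have ht := t_facts' G e he S
      simp only [Finset.card_univ, Fintype.card_fin]
      constructor
      · intro h; exact ht.2.1 (by omega)
      · intro h; have := ht.2.2 h; omega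
    rw [hfilt]
  refine ⟨parti, le_antisymm ?_ ?_⟩
  · apply Finset.sup'_le
    intro W hW
    rw [Finset.mem_powersetCard_univ] at hW
    rw [hmain W hW]
    have hD : W.toRight.card ≤ ℓ - 2 := by
      have := Finset.card_le_univ W.toRight
      simpa using this
    by_cases hDeq : W.toRight.card = ℓ - 2
    · have hWv : W.toLeft.card = K := by
        have := Finset.card_toLeft_add_card_toRight (u := W)
        omega
      have hsub : G.edgeFinset.filter
          (fun e => (W.toLeft.filter (· ∈ e)).card + W.toRight.card = ℓ)
          ⊆ G.edgeFinset.filter (fun e => ∀ v ∈ e, v ∈ W.toLeft) := by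
        intro e he
        rw [Finset.mem_filter] at he ⊢
        refine ⟨he.1, ?_⟩
        have ht := t_facts' G e he.1 W.toLeft
        exact ht.2.1 (by omega)
      have h1 : (((G.edgeFinset.filter
          (fun e => (W.toLeft.filter (· ∈ e)).card + W.toRight.card = ℓ)).card : ℝ))
          ≤ ((G.edgeFinset.filter (fun e => ∀ v ∈ e, v ∈ W.toLeft)).card : ℝ) :=
        Nat.cast_le.2 (Finset.card_le_card hsub)
      have h2 : ((G.edgeFinset.filter (fun e => ∀ v ∈ e, v ∈ W.toLeft)).card : ℝ)
          ≤ ((Finset.univ : Finset V).powersetCard K).sup' hne2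
            (fun S => ((G.edgeFinset.filter (fun e => ∀ v ∈ e, v ∈ S)).card : ℝ)) :=
        Finset.le_sup' (fun S => ((G.edgeFinset.filter (fun e => ∀ v ∈ e, v ∈ S)).card : ℝ)) (Finset.mem_powersetCard_univ.2 hWv)
      exact mul_le_mul_of_nonneg_left (h1.trans h2) hα_pos.le
    · have hempty : G.edgeFinset.filter
          (fun e => (W.toLeft.filter (· ∈ e)).card + W.toRight.card = ℓ) = ∅ := by
        rw [Finset.filter_eq_empty_iff]
        intro e he
        have ht := (t_facts' G e he W.toLeft).1
        omega
      rw [hempty]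
      simp only [Finset.card_empty, Nat.cast_zero, mul_zero]
      obtain ⟨S₀, hS₀⟩ := hne2
      have h0 : (0:ℝ) ≤ ((G.edgeFinset.filter (fun e => ∀ v ∈ e, v ∈ S₀)).card : ℝ) :=
        Nat.cast_nonneg _
      exact mul_nonneg hα_pos.le (le_trans h0 (Finset.le_sup' (fun S => ((G.edgeFinset.filter (fun e => ∀ v ∈ e, v ∈ S)).card : ℝ)) hS₀))
  · obtain ⟨S₀, hS₀mem, hS₀eq⟩ := Finset.exists_mem_eq_sup' hne2
      (fun S => ((G.edgeFinset.filter (fun e => ∀ v ∈ e, v ∈ S)).card : ℝ))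
    rw [hS₀eq]
    rw [Finset.mem_powersetCard_univ] at hS₀mem
    rw [← parti S₀ hS₀mem]
    exact Finset.le_sup' _ (Finset.mem_powersetCard_univ.2 (hcardW S₀ hS₀mem))
end

section
/- Let G be a bipartite graph with parts U and V (all edges join U to V) and let K be an integer with 1 ≤ K ≤ |V|. Consider the OWA-Winner instance whose agents are the vertices of U, whose items are the vertices of V, where the utility of agent w for item v is 1 if {w, v} is an edge of G and 0 otherwise, with committee size K and the K-median OWA (0, …, 0, 1) of length K. Then: (i) for every S ⊆ V with |S| = K, u^{K-med}(S) = |{w ∈ U : w is adjacent to every v ∈ S}|; and (ii) K · max_{S ⊆ V, |S| = K} u^{K-med}(S) equals the maximum number of edges of a complete bipartite subgraph X × S of G with X ⊆ U, S ⊆ V, and |S| = K. -/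
open Finset

lemma min_entry {U V : Type*} [DecidableEq V]
    (E : U → V → Prop) [∀ w v, Decidable (E w v)] (K : ℕ) (hK : 1 ≤ K)
    {S : Finset V} (hS : S.card = K) (w : U) :
    (((S.1.map (fun v => if E w v then (1 : ℝ) else 0)).sort (· ≤ ·)).reverse.getD (K-1) 0)
      = if ∀ v ∈ S, E w v then 1 else 0 := by
  set M := S.1.map (fun v => if E w v then (1 : ℝ) else 0) with hM
  set L := M.sort (· ≤ ·) with hL
  have hlen : L.length = K := by
    rw [hL, Multiset.length_sort, hM, Multiset.card_map, ← Finset.card_def, hS]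
  have hlt : K - 1 < L.reverse.length := by
    rw [List.length_reverse, hlen]; omega
  rw [List.getD_eq_getElem _ _ hlt]
  have hrev : L.reverse[K-1]'hlt = L[0]'(by omega) := by
    rw [List.getElem_reverse]
    congr 1
    omega
  rw [hrev]
  have hmem : L[0]'(by omega) ∈ M := by
    rw [← Multiset.mem_sort (· ≤ ·)]
    exact List.getElem_mem _
  obtain ⟨v, hv, hveq⟩ := Multiset.mem_map.mp hmem
  have hvS : v ∈ S := hv
  by_cases h : ∀ v ∈ S, E w v
  · rw [if_pos h]
    rw [← hveq, if_pos (h v hvS)]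
  · rw [if_neg h]
    push_neg at h
    obtain ⟨v', hv'S, hv'⟩ := h
    have h0 : (0 : ℝ) ∈ M := by
      rw [hM, Multiset.mem_map]
      exact ⟨v', hv'S, by simp [hv']⟩
    rw [← Multiset.mem_sort (· ≤ ·), ← hL] at h0
    obtain ⟨j, hj, hjeq⟩ := List.getElem_of_mem h0
    have hsorted : L.Pairwise (· ≤ ·) := Multiset.pairwise_sort _ _
    have hle : L[0]'(by omega) ≤ L[j]'hj :=
      hsorted.rel_get_of_le (by simp)
    rw [hjeq] at hle
    have hge : (0:ℝ) ≤ L[0]'(by omega) := by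
      rw [← hveq]; split <;> norm_num
    linarith

open scoped Classical

/-- The `K`-median total utility of a size-`K` set `S ⊆ V` in the instance obtained
from a bipartite graph with parts `U`, `V` and edge relation `E`: agents are the
vertices of `U`, the utility of `w` for `v` is `1` if `E w v` and `0` otherwise, and
the OWA is the `K`-median `(0, …, 0, 1)`. -/
noncomputable def stmt11util {U V : Type*} [Fintype U] [DecidableEq V]
    (E : U → V → Prop) [∀ w v, Decidable (E w v)] (K : ℕ) : Finset V → ℝ :=
  owaUtil (Finset.univ : Finset U)
    (fun w v => if E w v then (1 : ℝ) else 0)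
    K (fun j => if j = K - 1 then (1 : ℝ) else 0)

lemma util_eq {U V : Type*} [Fintype U] [DecidableEq V]
    (E : U → V → Prop) [∀ w v, Decidable (E w v)] (K : ℕ) (hK : 1 ≤ K)
    {S : Finset V} (hS : S.card = K) :
    stmt11util E K S =
      (((Finset.univ : Finset U).filter (fun w => ∀ v ∈ S, E w v)).card : ℝ) := by
  unfold stmt11util owaUtil
  have : ∀ w : U, (∑ j ∈ Finset.range K, (if j = K - 1 then (1:ℝ) else 0) *
      (((S.1.map (fun v => if E w v then (1 : ℝ) else 0)).sort (· ≤ ·)).reverse.getD j 0))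
      = if ∀ v ∈ S, E w v then 1 else 0 := by
    intro w
    rw [Finset.sum_eq_single (K-1)]
    · rw [if_pos rfl, one_mul, min_entry E K hK hS w]
    · intro j _ hj; rw [if_neg hj, zero_mul]
    · intro hmem; exact absurd (Finset.mem_range.mpr (by omega)) hmem
  rw [Finset.sum_congr rfl (fun w _ => this w), Finset.sum_boole]

/-- Correctness of the reduction from Maximum Edge Biclique to `K`-median-OWA-Winner:
(i) every size-`K` set `S ⊆ V` has utility `#{w ∈ U : w adjacent to all of S}`, and
(ii) `K` times the optimal utility equals the maximum number of edges of a complete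
bipartite subgraph `X × S` of `G` with `|S| = K`. -/
theorem stmt_11 {U V : Type*} [Fintype U] [Fintype V] [DecidableEq V]
    (E : U → V → Prop) [∀ w v, Decidable (E w v)]
    (K : ℕ) (hK : 1 ≤ K) (hKV : K ≤ Fintype.card V)
    (hne : ((Finset.univ : Finset V).powersetCard K).Nonempty) :
    (∀ S : Finset V, S.card = K →
      stmt11util E K S =
        (((Finset.univ : Finset U).filter (fun w => ∀ v ∈ S, E w v)).card : ℝ)) ∧
    (∃ (X : Finset U) (S : Finset V), S.card = K ∧ (∀ w ∈ X, ∀ v ∈ S, E w v) ∧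
      (K : ℝ) * ((Finset.univ : Finset V).powersetCard K).sup' hne (stmt11util E K) =
        ((X.card * S.card : ℕ) : ℝ) ∧
      ∀ (X' : Finset U) (S' : Finset V), S'.card = K →
        (∀ w ∈ X', ∀ v ∈ S', E w v) →
        ((X'.card * S'.card : ℕ) : ℝ) ≤
          (K : ℝ) * ((Finset.univ : Finset V).powersetCard K).sup' hne (stmt11util E K)) := by
  set f : Finset V → ℕ :=
    fun S => ((Finset.univ : Finset U).filter (fun w => ∀ v ∈ S, E w v)).card with hf
  have hcard : ∀ S ∈ (Finset.univ : Finset V).powersetCard K, S.card = K := by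
    intro S hS
    exact (Finset.mem_powersetCard.mp hS).2
  have key : ∀ S : Finset V, S.card = K → stmt11util E K S = (f S : ℝ) := by
    intro S hS
    rw [util_eq E K hK hS, hf]
    norm_cast
    congr 1
    exact Finset.filter_congr_decidable _ _ _
  refine ⟨?_, ?_⟩
  · intro S hS
    rw [key S hS, hf]
  obtain ⟨S₀, hS₀mem, hS₀max⟩ := Finset.exists_max_image _ f hne
  have hS₀card : S₀.card = K := hcard S₀ hS₀mem
  have hsup : ((Finset.univ : Finset V).powersetCard K).sup' hne (stmt11util E K)
      = (f S₀ : ℝ) := by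
    apply le_antisymm
    · apply Finset.sup'_le
      intro T hT
      rw [key T (hcard T hT)]
      exact_mod_cast hS₀max T hT
    · rw [← key S₀ hS₀card]
      exact Finset.le_sup' _ hS₀mem
  refine ⟨(Finset.univ : Finset U).filter (fun w => ∀ v ∈ S₀, E w v), S₀, hS₀card,
    fun w hw => (Finset.mem_filter.mp hw).2, ?_, ?_⟩
  · rw [hsup, hS₀card]
    have hfS₀ : ((Finset.univ : Finset U).filter (fun w => ∀ v ∈ S₀, E w v)).card = f S₀ := by
      rw [hf]
    rw [hfS₀]
    push_cast
    ring
  · intro X' S' hS' hbi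
    have hmem' : S' ∈ (Finset.univ : Finset V).powersetCard K :=
      Finset.mem_powersetCard.mpr ⟨Finset.subset_univ _, hS'⟩
    have hX' : X'.card ≤ f S' := by
      apply Finset.card_le_card
      intro w hw
      exact Finset.mem_filter.mpr ⟨Finset.mem_univ w, hbi w hw⟩
    have : X'.card * S'.card ≤ f S₀ * K := by
      rw [hS']
      exact Nat.mul_le_mul_right K (hX'.trans (hS₀max S' hmem'))
    rw [hsup, mul_comm (K:ℝ)]
    exact_mod_cast Nat.le_of_eq rfl |>.trans (by exact_mod_cast this)
end

section
/- Let A be a set of m items and let each of n agents i designate a set T_i ⊆ A with |T_i| = x, where 1 ≤ x ≤ m. Fix integers ℓ and K with 1 ≤ ℓ ≤ x and 1 ≤ K ≤ m. Then there exists W ⊆ A with |W| = K such that Σ_{i=1}^{n} min(ℓ, |W ∩ T_i|) ≥ ℓ·n·(1 − (1 − x/(ℓm))^K). -/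
open Finset

/-- The "free slots" counting bound: if each of `n` agents designates a set `T i` of
exactly `x` items out of `m`, then there is a size-`K` set `W` of items with
`∑_i min(ℓ, |W ∩ T i|) ≥ ℓ·n·(1 − (1 − x/(ℓm))^K)`. -/
theorem stmt_13 {A : Type*} [Fintype A] [DecidableEq A]
    (n m x ℓ K : ℕ) (hm : Fintype.card A = m)
    (T : Fin n → Finset A) (hT : ∀ i, (T i).card = x)
    (hx1 : 1 ≤ x) (hxm : x ≤ m)
    (hℓ1 : 1 ≤ ℓ) (hℓx : ℓ ≤ x)
    (hK1 : 1 ≤ K) (hKm : K ≤ m) :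
    ∃ W : Finset A, W.card = K ∧
      (ℓ : ℝ) * (n : ℝ) * (1 - (1 - (x : ℝ) / ((ℓ : ℝ) * (m : ℝ))) ^ K) ≤
        ∑ i : Fin n, (min ℓ ((W ∩ T i).card) : ℝ) := by
  have hm0 : 0 < m := le_trans hx1 hxm
  have hℓ0 : (0:ℝ) < ℓ := by exact_mod_cast hℓ1
  have hmR : (0:ℝ) < m := by exact_mod_cast hm0
  set q : ℝ := (x:ℝ) / ((ℓ:ℝ) * (m:ℝ)) with hq
  have hq0 : 0 ≤ q := by positivity
  have hq1 : q ≤ 1 := by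
    rw [hq, div_le_one (by positivity)]
    calc (x:ℝ) ≤ m := by exact_mod_cast hxm
      _ ≤ (ℓ:ℝ) * m := le_mul_of_one_le_left hmR.le (by exact_mod_cast hℓ1)
  have key : ∀ k, k ≤ m → ∃ W : Finset A, W.card = k ∧
      (ℓ:ℝ) * (n:ℝ) - ∑ i : Fin n, (min ℓ ((W ∩ T i).card) : ℝ) ≤
        (ℓ:ℝ) * (n:ℝ) * (1 - q) ^ k := by
    intro k
    induction k with
    | zero => intro _; exact ⟨∅, by simp, by simp⟩
    | succ k ih =>
      intro hk
      obtain ⟨W, hWcard, hWρ⟩ := ih (by omega)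
      have hcx : ∀ i, (W ∩ T i).card ≤ x := fun i => by
        simpa [hT i] using card_le_card (inter_subset_right (s₁ := W) (s₂ := T i))
      set s : Finset A := Wᶜ with hs
      have hscard : s.card = m - k := by rw [hs, card_compl, hWcard, hm]
      have hsne : s.Nonempty := by rw [← card_pos, hscard]; omega
      have hscard0 : (0:ℝ) < s.card := by exact_mod_cast hsne.card_pos
      have hsm : (s.card : ℝ) ≤ m := by
        rw [hscard]; exact_mod_cast Nat.sub_le m k
      set ind : A → Fin n → ℕ :=
        fun a i => if a ∈ T i ∧ (W ∩ T i).card < ℓ then 1 else 0 with hind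
      have step1 : ∀ a ∉ W, ∀ i,
          min ℓ ((insert a W ∩ T i).card) = min ℓ ((W ∩ T i).card) + ind a i := by
        intro a ha i
        by_cases hat : a ∈ T i
        · rw [Finset.insert_inter_of_mem hat,
            card_insert_of_notMem (fun h => ha (mem_inter.1 h).1)]
          simp only [hind, hat, true_and]
          split_ifs with h <;> omega
        · rw [Finset.insert_inter_of_notMem hat]
          simp [hind, hat]
      set D : A → ℝ := fun a => ∑ i : Fin n, (ind a i : ℝ) with hD
      set ρ : ℝ := (ℓ:ℝ) * (n:ℝ) - ∑ i : Fin n, (min ℓ ((W ∩ T i).card) : ℝ) with hρ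
      clear_value ρ
      have hρeq : ρ = ∑ i : Fin n, ((ℓ:ℝ) - (min (ℓ:ℝ) ((W ∩ T i).card))) := by
        rw [hρ, Finset.sum_sub_distrib, Finset.sum_const]
        simp [mul_comm]
      have hρ0 : 0 ≤ ρ := by
        rw [hρeq]
        apply Finset.sum_nonneg
        intro i _
        have : min (ℓ:ℝ) ((W ∩ T i).card) ≤ (ℓ:ℝ) := min_le_left _ _
        linarith
      have inner : ∀ i, ∑ a ∈ s, (ind a i : ℝ) =
          if (W ∩ T i).card < ℓ then (x:ℝ) - (W ∩ T i).card else 0 := by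
        intro i
        by_cases h : (W ∩ T i).card < ℓ
        · simp only [hind, h, and_true, if_true, Nat.cast_ite, Nat.cast_one,
            Nat.cast_zero]
          rw [Finset.sum_ite_mem, Finset.sum_const, nsmul_eq_mul, mul_one]
          have hset : s ∩ T i = T i \ W := by
            ext b; simp [hs, mem_sdiff, and_comm]
          rw [hset]
          have hcard : (T i \ W).card + (W ∩ T i).card = x := by
            have h2 := Finset.card_inter_add_card_sdiff (T i) W
            rw [hT i, Finset.inter_comm] at h2
            omega
          have : ((T i \ W).card : ℝ) + ((W ∩ T i).card : ℝ) = (x : ℝ) := by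
            exact_mod_cast hcard
          linarith
        · simp [hind, h]
      have pointwise : ∀ i,
          (x:ℝ) / ℓ * ((ℓ:ℝ) - min (ℓ:ℝ) ((W ∩ T i).card)) ≤
            (if (W ∩ T i).card < ℓ then (x:ℝ) - (W ∩ T i).card else 0) := by
        intro i
        by_cases h : (W ∩ T i).card < ℓ
        · have hcℓ : ((W ∩ T i).card : ℝ) ≤ (ℓ:ℝ) := by
            exact_mod_cast le_of_lt h
          rw [if_pos h, min_eq_right hcℓ, div_mul_eq_mul_div, div_le_iff₀ hℓ0]
          have hℓx' : (ℓ:ℝ) ≤ x := by exact_mod_cast hℓx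
          have hc0 : (0:ℝ) ≤ ((W ∩ T i).card : ℝ) := Nat.cast_nonneg _
          nlinarith
        · have hcℓ : (ℓ:ℝ) ≤ ((W ∩ T i).card : ℝ) := by
            exact_mod_cast Nat.le_of_not_lt h
          rw [if_neg h, min_eq_left hcℓ]
          simp
      have lower : (x:ℝ) / ℓ * ρ ≤ ∑ a ∈ s, D a := by
        rw [hρeq, Finset.mul_sum]
        rw [show (∑ a ∈ s, D a) = ∑ i : Fin n, ∑ a ∈ s, (ind a i : ℝ) by
          rw [hD]; exact Finset.sum_comm]
        apply Finset.sum_le_sum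
        intro i _
        rw [inner i]
        exact pointwise i
      obtain ⟨a, haS, haD⟩ := Finset.exists_le_of_sum_le hsne
        (show ∑ _a ∈ s, (∑ b ∈ s, D b) / s.card ≤ ∑ a ∈ s, D a by
          rw [Finset.sum_const, nsmul_eq_mul, mul_div_cancel₀ _ (ne_of_gt hscard0)])
      have haW : a ∉ W := by
        rw [hs] at haS; exact Finset.mem_compl.1 haS
      have hDa : q * ρ ≤ D a := by
        have h1 : q * (m:ℝ) = (x:ℝ) / ℓ := by
          rw [hq]; field_simp
        have h2 : q * (s.card : ℝ) ≤ (x:ℝ) / ℓ := by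
          rw [← h1]; exact mul_le_mul_of_nonneg_left hsm hq0
        have h3 : q * ρ * s.card ≤ (x:ℝ) / ℓ * ρ := by
          calc q * ρ * s.card = (q * s.card) * ρ := by ring
            _ ≤ ((x:ℝ)/ℓ) * ρ := mul_le_mul_of_nonneg_right h2 hρ0
        have h4 : q * ρ ≤ (∑ b ∈ s, D b) / s.card := by
          rw [le_div_iff₀ hscard0]
          exact le_trans h3 lower
        exact le_trans h4 haD
      refine ⟨insert a W, by rw [card_insert_of_notMem haW, hWcard], ?_⟩
      have hsum : ∑ i : Fin n, (min ℓ ((insert a W ∩ T i).card) : ℝ) =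
          (∑ i : Fin n, (min ℓ ((W ∩ T i).card) : ℝ)) + D a := by
        rw [hD, ← Finset.sum_add_distrib]
        apply Finset.sum_congr rfl
        intro i _
        rw [← Nat.cast_min, ← Nat.cast_min, step1 a haW i]
        push_cast
        ring
      rw [hsum]
      have h1q : (0:ℝ) ≤ 1 - q := by linarith
      have hgoal : (ℓ:ℝ) * n -
          ((∑ i : Fin n, (min ℓ ((W ∩ T i).card) : ℝ)) + D a) ≤ ρ - q * ρ := by
        rw [hρ] at hDa ⊢; linarith
      calc (ℓ:ℝ) * n - ((∑ i : Fin n, (min ℓ ((W ∩ T i).card) : ℝ)) + D a)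
          ≤ ρ - q * ρ := hgoal
        _ = ρ * (1 - q) := by ring
        _ ≤ ((ℓ:ℝ) * n * (1 - q)^k) * (1 - q) :=
            mul_le_mul_of_nonneg_right hWρ h1q
        _ = (ℓ:ℝ) * n * (1 - q)^(k+1) := by ring
  obtain ⟨W, h1, h2⟩ := key K hKm
  refine ⟨W, h1, ?_⟩
  have heq : (ℓ:ℝ) * n * (1 - (1-q)^K) =
      (ℓ:ℝ) * n - (ℓ:ℝ) * n * (1-q)^K := by ring
  rw [heq]
  linarith
end

section
/- Let each of n agents have a linear order over a set A of m items. Let K, p, t be positive integers with K ≤ m, p ≤ K, p dividing K, and t ≤ p, and let γ ∈ (0,1] be such that x := γm/p is a positive integer with t·x ≤ m. Then there exists a set C ⊆ A with |C| ≤ K/p such that at least n·(1 − e^{−γK/p²}) agents each rank at least one member of C at a position in {(t−1)x + 1, …, t·x}. -/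
set_option maxHeartbeats 1000000


open Finset
open scoped Classical

/-- Pigeonhole step: some item covers at least an `x/m` fraction of the agents in `S`. -/
lemma greedy_step {A : Type*} [Fintype A] {n : ℕ} (seg : Fin n → A → Prop)
    [∀ i a, Decidable (seg i a)] {x m : ℕ} (hm : Fintype.card A = m) (hm0 : 0 < m)
    (hcount : ∀ i, ((Finset.univ : Finset A).filter (fun a => seg i a)).card = x)
    (S : Finset (Fin n)) :
    ∃ a : A, S.card * x ≤ (S.filter (fun i => seg i a)).card * m := by
  have hne : (Finset.univ : Finset A).Nonempty := by
    rw [← Finset.card_pos, Finset.card_univ, hm]; exact hm0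
  by_contra h
  push_neg at h
  have hsum : ∑ a : A, (S.filter (fun i => seg i a)).card = S.card * x := by
    simp only [Finset.card_filter]
    rw [Finset.sum_comm]
    have : ∀ i ∈ S, (∑ a : A, if seg i a then 1 else 0) = x := by
      intro i _
      rw [← Finset.card_filter]; exact hcount i
    rw [Finset.sum_congr rfl this, Finset.sum_const, smul_eq_mul]
  have hlt : ∑ a : A, (S.filter (fun i => seg i a)).card * m <
      ∑ _a : A, S.card * x := by
    apply Finset.sum_lt_sum_of_nonempty hne
    intro a _; exact h a
  rw [← Finset.sum_mul, hsum, Finset.sum_const, Finset.card_univ, hm, smul_eq_mul,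
    mul_comm m (S.card * x)] at hlt
  exact lt_irrefl _ hlt

/-- Greedy covering: after `r` steps, the uncovered fraction is at most `(1 - x/m)^r`. -/
lemma greedy {A : Type*} [Fintype A] [DecidableEq A] {n : ℕ} (seg : Fin n → A → Prop)
    [∀ i a, Decidable (seg i a)] {x m : ℕ} (hm : Fintype.card A = m) (hm0 : 0 < m) (hxm : x ≤ m)
    (hcount : ∀ i, ((Finset.univ : Finset A).filter (fun a => seg i a)).card = x) :
    ∀ r : ℕ, ∃ C : Finset A, C.card ≤ r ∧
      ((((Finset.univ : Finset (Fin n)).filter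
          (fun i => ¬ ∃ a ∈ C, seg i a)).card : ℝ) ≤
        (n : ℝ) * (1 - (x : ℝ) / (m : ℝ)) ^ r) := by
  have hmR : (0 : ℝ) < (m : ℝ) := by exact_mod_cast hm0
  have h1xm : (0 : ℝ) ≤ 1 - (x : ℝ) / (m : ℝ) := by
    have : (x : ℝ) ≤ (m : ℝ) := by exact_mod_cast hxm
    have := div_le_one_of_le₀ this hmR.le
    linarith
  intro r
  induction r with
  | zero =>
    refine ⟨∅, le_refl _, ?_⟩
    simp only [pow_zero, mul_one]
    calc (((Finset.univ : Finset (Fin n)).filter _).card : ℝ)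
        ≤ ((Finset.univ : Finset (Fin n)).card : ℝ) := by
          exact_mod_cast Finset.card_le_card (Finset.filter_subset _ _)
      _ = (n : ℝ) := by simp
  | succ r ih =>
    obtain ⟨C, hCcard, hCbound⟩ := ih
    set S := (Finset.univ : Finset (Fin n)).filter (fun i => ¬ ∃ a ∈ C, seg i a) with hS
    obtain ⟨a, ha⟩ := greedy_step seg hm hm0 hcount S
    refine ⟨insert a C, le_trans (Finset.card_insert_le _ _) (by omega), ?_⟩
    have hfilter : (Finset.univ : Finset (Fin n)).filter
        (fun i => ¬ ∃ b ∈ insert a C, seg i b) = S.filter (fun i => ¬ seg i a) := by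
      rw [hS, Finset.filter_filter]
      apply Finset.filter_congr
      intro i _
      simp only [Finset.mem_insert]
      constructor
      · intro h; constructor
        · intro ⟨b, hb, hsb⟩; exact h ⟨b, Or.inr hb, hsb⟩
        · intro hsa; exact h ⟨a, Or.inl rfl, hsa⟩
      · intro ⟨h1, h2⟩ ⟨b, hb, hsb⟩
        rcases hb with rfl | hb
        · exact h2 hsb
        · exact h1 ⟨b, hb, hsb⟩
    rw [hfilter]
    have hcovle : (S.filter (fun i => seg i a)).card ≤ S.card :=
      Finset.card_le_card (Finset.filter_subset _ _)
    have hcard : (S.filter (fun i => ¬ seg i a)).card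
        = S.card - (S.filter (fun i => seg i a)).card := by
      have := Finset.card_filter_add_card_filter_not (s := S)
        (p := fun i => seg i a)
      omega
    rw [hcard]
    set cov := (S.filter (fun i => seg i a)).card with hcov
    rw [Nat.cast_sub hcovle]
    have hfrac : (S.card : ℝ) * ((x : ℝ) / (m : ℝ)) ≤ (cov : ℝ) := by
      rw [mul_div_assoc', div_le_iff₀ hmR]
      exact_mod_cast ha
    have key : (S.card : ℝ) - (cov : ℝ) ≤ (S.card : ℝ) * (1 - (x : ℝ) / (m : ℝ)) := by
      have hexpand : (S.card : ℝ) * (1 - (x : ℝ) / (m : ℝ))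
          = (S.card : ℝ) - (S.card : ℝ) * ((x : ℝ) / (m : ℝ)) := by ring
      rw [hexpand]
      linarith
    calc (S.card : ℝ) - (cov : ℝ)
        ≤ (S.card : ℝ) * (1 - (x : ℝ) / (m : ℝ)) := key
      _ ≤ ((n : ℝ) * (1 - (x : ℝ) / (m : ℝ)) ^ r) * (1 - (x : ℝ) / (m : ℝ)) :=
          mul_le_mul_of_nonneg_right hCbound h1xm
      _ = (n : ℝ) * (1 - (x : ℝ) / (m : ℝ)) ^ (r + 1) := by ring

/-- The segment-covering lemma: if `n` agents each rank `m` items (`pos i a` is the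
0-indexed position of item `a` in agent `i`'s ranking), `p ∣ K`, `t ≤ p`, and
`x = γm/p` is a positive integer with `t·x ≤ m`, then there is a set `C` of at most
`K/p` items such that at least `n·(1 − e^{−γK/p²})` agents each rank some member of
`C` at a (1-indexed) position in `{(t−1)x + 1, …, t·x}`. -/
theorem stmt_14 {A : Type*} [Fintype A] [DecidableEq A]
    (n m : ℕ) (hm : Fintype.card A = m)
    (pos : Fin n → A ≃ Fin m)
    (K p t x : ℕ) (hK1 : 1 ≤ K) (hp1 : 1 ≤ p) (ht1 : 1 ≤ t)
    (hKm : K ≤ m) (hpK : p ≤ K) (hdvd : p ∣ K) (htp : t ≤ p)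
    (γ : ℝ) (hγ0 : 0 < γ) (hγ1 : γ ≤ 1)
    (hx : (x : ℝ) = γ * (m : ℝ) / (p : ℝ)) (hx1 : 1 ≤ x) (htx : t * x ≤ m) :
    ∃ C : Finset A, C.card ≤ K / p ∧
      (n : ℝ) * (1 - Real.exp (-(γ * (K : ℝ)) / ((p : ℝ) ^ 2))) ≤
        (((Finset.univ : Finset (Fin n)).filter
          (fun i => ∃ a ∈ C,
            (t - 1) * x ≤ ((pos i a : Fin m) : ℕ) ∧
              ((pos i a : Fin m) : ℕ) < t * x)).card : ℝ) := by
  have hm0 : 0 < m := lt_of_lt_of_le hK1 hKm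
  have hxm : x ≤ m := le_trans (Nat.le_mul_of_pos_left x ht1) htx
  set seg : Fin n → A → Prop :=
    fun i a => (t - 1) * x ≤ ((pos i a : Fin m) : ℕ) ∧ ((pos i a : Fin m) : ℕ) < t * x
    with hseg
  -- each agent has exactly x items in the segment
  have hcount : ∀ i, ((Finset.univ : Finset A).filter (fun a => seg i a)).card = x := by
    intro i
    have hbij : ((Finset.univ : Finset A).filter (fun a => seg i a)).card
        = (Finset.Ico ((t - 1) * x) (t * x)).card := by
      apply Finset.card_bij (fun a _ => ((pos i a : Fin m) : ℕ))
      · intro a ha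
        simp only [Finset.mem_filter, hseg] at ha
        simp only [Finset.mem_Ico]
        exact ha.2
      · intro a ha b hb hab
        have : pos i a = pos i b := Fin.val_injective hab
        exact (pos i).injective this
      · intro k hk
        simp only [Finset.mem_Ico] at hk
        have hkm : k < m := lt_of_lt_of_le hk.2 htx
        refine ⟨(pos i).symm ⟨k, hkm⟩, ?_, ?_⟩
        · simp only [Finset.mem_filter, hseg, Equiv.apply_symm_apply]
          exact ⟨Finset.mem_univ _, hk.1, hk.2⟩
        · simp [Equiv.apply_symm_apply]
    rw [hbij, Nat.card_Ico]
    obtain ⟨t', rfl⟩ : ∃ t', t = t' + 1 := ⟨t - 1, by omega⟩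
    simp only [Nat.add_sub_cancel, Nat.succ_mul]
    omega
  obtain ⟨C, hCcard, hCbound⟩ := greedy seg hm hm0 hxm hcount (K / p)
  refine ⟨C, hCcard, ?_⟩
  -- covered + uncovered = n
  have hpart : ((Finset.univ : Finset (Fin n)).filter (fun i => ∃ a ∈ C, seg i a)).card
      + ((Finset.univ : Finset (Fin n)).filter (fun i => ¬ ∃ a ∈ C, seg i a)).card = n := by
    rw [Finset.card_filter_add_card_filter_not, Finset.card_univ, Fintype.card_fin]
  -- exponential bound
  have hmR : (0 : ℝ) < (m : ℝ) := by exact_mod_cast hm0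
  have hpR : (0 : ℝ) < (p : ℝ) := by exact_mod_cast hp1
  have hxdm : (x : ℝ) / (m : ℝ) = γ / (p : ℝ) := by
    rw [hx]; field_simp
  have h1xm : (0 : ℝ) ≤ 1 - (x : ℝ) / (m : ℝ) := by
    have : (x : ℝ) ≤ (m : ℝ) := by exact_mod_cast hxm
    have := div_le_one_of_le₀ this hmR.le
    linarith
  have hKdp : ((K / p : ℕ) : ℝ) = (K : ℝ) / (p : ℝ) :=
    Nat.cast_div hdvd hpR.ne'
  have hexp : (1 - (x : ℝ) / (m : ℝ)) ^ (K / p)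
      ≤ Real.exp (-(γ * (K : ℝ)) / ((p : ℝ) ^ 2)) := by
    have hstep : 1 - (x : ℝ) / (m : ℝ) ≤ Real.exp (-((x : ℝ) / (m : ℝ))) := by
      have := Real.add_one_le_exp (-((x : ℝ) / (m : ℝ)))
      linarith
    calc (1 - (x : ℝ) / (m : ℝ)) ^ (K / p)
        ≤ (Real.exp (-((x : ℝ) / (m : ℝ)))) ^ (K / p) :=
          pow_le_pow_left₀ h1xm hstep _
      _ = Real.exp (((K / p : ℕ) : ℝ) * (-((x : ℝ) / (m : ℝ)))) := by
          rw [← Real.exp_nat_mul]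
      _ = Real.exp (-(γ * (K : ℝ)) / ((p : ℝ) ^ 2)) := by
          rw [hKdp, hxdm]
          congr 1
          field_simp
  have hnR : (0 : ℝ) ≤ (n : ℝ) := Nat.cast_nonneg n
  have hunc : (((Finset.univ : Finset (Fin n)).filter (fun i => ¬ ∃ a ∈ C, seg i a)).card : ℝ)
      ≤ (n : ℝ) * Real.exp (-(γ * (K : ℝ)) / ((p : ℝ) ^ 2)) :=
    le_trans hCbound (mul_le_mul_of_nonneg_left hexp hnR)
  have hcovered : (((Finset.univ : Finset (Fin n)).filter (fun i => ∃ a ∈ C, seg i a)).card : ℝ)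
      = (n : ℝ) - (((Finset.univ : Finset (Fin n)).filter (fun i => ¬ ∃ a ∈ C, seg i a)).card : ℝ) := by
    have := hpart
    push_cast [← this]
    ring
  simp only [hseg] at hcovered ⊢
  rw [hcovered]
  linarith
end

section
/- Fix a real p > 1 and integers ℓ, K with 1 ≤ ℓ ≤ K ≤ m. Let g = gprog[p] = (p^{K−1}, p^{K−2}, …, p, 1) be the geometric progression OWA of length K, and let g|ℓ be the vector obtained from g by replacing its entries in positions ℓ+1, …, K by 0. Then for every W ⊆ A with |W| = K, u^{g|ℓ}(W) ≥ (1 − p^{−ℓ}) · u^{g}(W). -/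
open Finset

lemma key_trunc (p : ℝ) (hp : 1 < p) (ℓ K : ℕ) (hℓ : 1 ≤ ℓ) (hℓK : ℓ ≤ K)
    (x : ℕ → ℝ) (hx0 : ∀ j, 0 ≤ x j) (hxa : ∀ j k, j ≤ k → x k ≤ x j) :
    (1 - 1 / p ^ ℓ) * ∑ j ∈ Finset.range K, p ^ (K - 1 - j) * x j ≤
      ∑ j ∈ Finset.range K, (if j < ℓ then p ^ (K - 1 - j) else 0) * x j := by
  have hp0 : (0 : ℝ) < p := lt_trans one_pos hp
  have hpl : (0 : ℝ) < p ^ ℓ := pow_pos hp0 ℓ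
  have hterm : ∀ j, 0 ≤ p ^ (K - 1 - j) * x j := fun j =>
    mul_nonneg (le_of_lt (pow_pos hp0 _)) (hx0 j)
  have hsplit := Finset.sum_range_add_sum_Ico (fun j => p ^ (K - 1 - j) * x j) hℓK
  have hT : ∑ j ∈ Finset.range K, (if j < ℓ then p ^ (K - 1 - j) else 0) * x j
      = ∑ j ∈ Finset.range ℓ, p ^ (K - 1 - j) * x j := by
    rw [← Finset.sum_range_add_sum_Ico
      (fun j => (if j < ℓ then p ^ (K - 1 - j) else 0) * x j) hℓK]
    have h1 : ∑ j ∈ Finset.range ℓ, (if j < ℓ then p ^ (K - 1 - j) else 0) * x j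
        = ∑ j ∈ Finset.range ℓ, p ^ (K - 1 - j) * x j :=
      Finset.sum_congr rfl fun j hj => by
        rw [if_pos (Finset.mem_range.mp hj)]
    have h2 : ∑ j ∈ Finset.Ico ℓ K, (if j < ℓ then p ^ (K - 1 - j) else 0) * x j = 0 :=
      Finset.sum_eq_zero fun j hj => by
        rw [if_neg (by exact not_lt.mpr (Finset.mem_Ico.mp hj).1), zero_mul]
    rw [h1, h2, add_zero]
  rw [hT]
  -- bound the tail
  have htail : ∑ j ∈ Finset.Ico ℓ K, p ^ (K - 1 - j) * x j
      ≤ (1 / p ^ ℓ) * ∑ j ∈ Finset.range K, p ^ (K - 1 - j) * x j := by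
    rw [Finset.sum_Ico_eq_sum_range]
    calc ∑ i ∈ Finset.range (K - ℓ), p ^ (K - 1 - (ℓ + i)) * x (ℓ + i)
        ≤ ∑ i ∈ Finset.range (K - ℓ), (1 / p ^ ℓ) * (p ^ (K - 1 - i) * x i) := by
          refine Finset.sum_le_sum fun i hi => ?_
          have hiK : i < K - ℓ := Finset.mem_range.mp hi
          have hexp : p ^ (K - 1 - i) = p ^ ℓ * p ^ (K - 1 - (ℓ + i)) := by
            rw [← pow_add]
            congr 1
            omega
          rw [hexp]
          have hx' : x (ℓ + i) ≤ x i := hxa i (ℓ + i) (by omega)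
          have := mul_le_mul_of_nonneg_left hx' (le_of_lt (pow_pos hp0 (K - 1 - (ℓ + i))))
          calc p ^ (K - 1 - (ℓ + i)) * x (ℓ + i)
              ≤ p ^ (K - 1 - (ℓ + i)) * x i := this
            _ = 1 / p ^ ℓ * (p ^ ℓ * p ^ (K - 1 - (ℓ + i)) * x i) := by
                field_simp
      _ = (1 / p ^ ℓ) * ∑ i ∈ Finset.range (K - ℓ), p ^ (K - 1 - i) * x i := by
          rw [Finset.mul_sum]
      _ ≤ (1 / p ^ ℓ) * ∑ j ∈ Finset.range K, p ^ (K - 1 - j) * x j := by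
          refine mul_le_mul_of_nonneg_left ?_ (by positivity)
          exact Finset.sum_le_sum_of_subset_of_nonneg
            (Finset.range_subset_range.mpr (Nat.sub_le K ℓ)) (fun j _ _ => hterm j)
  nlinarith [htail, hsplit]

/-- Truncation inequality for the geometric-progression OWA `gprog[p] =
(p^{K−1}, …, p, 1)` (0-indexed: entry `j` is `p^{K−1−j}`): replacing the entries in
positions beyond `ℓ` by `0` loses at most a `p^{−ℓ}` fraction of the total utility,
i.e. `u^{g|ℓ}(W) ≥ (1 − p^{−ℓ})·u^{g}(W)` for every size-`K` set `W`. -/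
theorem stmt_18 {I A : Type*} [DecidableEq A]
    (N : Finset I) (u : I → A → ℝ) (hu : ∀ i a, 0 ≤ u i a)
    (p : ℝ) (hp : 1 < p)
    (ℓ K : ℕ) (hℓ : 1 ≤ ℓ) (hℓK : ℓ ≤ K) :
    ∀ W : Finset A, W.card = K →
      (1 - 1 / p ^ ℓ) * owaUtil N u K (fun j => p ^ (K - 1 - j)) W ≤
        owaUtil N u K (fun j => if j < ℓ then p ^ (K - 1 - j) else 0) W := by
  intro W hW
  unfold owaUtil
  rw [Finset.mul_sum]
  refine Finset.sum_le_sum fun i _ => ?_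
  set L := ((W.1.map (u i)).sort (· ≤ ·)).reverse with hL
  have hLsorted : L.Pairwise (· ≥ ·) := by
    rw [List.pairwise_reverse]
    exact Multiset.pairwise_sort _ (· ≤ ·)
  have hLnonneg : ∀ y ∈ L, 0 ≤ y := by
    intro y hy
    rw [hL, List.mem_reverse, Multiset.mem_sort, Multiset.mem_map] at hy
    obtain ⟨a, _, rfl⟩ := hy
    exact hu i a
  have hx0 : ∀ j, 0 ≤ L.getD j 0 := by
    intro j
    by_cases h : j < L.length
    · rw [List.getD_eq_getElem L 0 h]
      exact hLnonneg _ (List.getElem_mem h)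
    · rw [List.getD_eq_default L 0 (not_lt.mp h)]
  have hxa : ∀ j k, j ≤ k → L.getD k 0 ≤ L.getD j 0 := by
    intro j k hjk
    by_cases h : k < L.length
    · have hj : j < L.length := lt_of_le_of_lt hjk h
      rw [List.getD_eq_getElem L 0 h, List.getD_eq_getElem L 0 hj]
      rcases eq_or_lt_of_le hjk with rfl | hlt
      · exact le_refl _
      · exact hLsorted.rel_get_of_lt (a := ⟨j, hj⟩) (b := ⟨k, h⟩) hlt
    · rw [List.getD_eq_default L 0 (not_lt.mp h)]
      exact hx0 j
  exact key_trunc p hp ℓ K hℓ hℓK (fun j => L.getD j 0) hx0 hxa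
end
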